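/- arXiv:2410.07483 — 5 statements merged into one kernel-verified Lean document; each statement's English description precedes it below -/
import Mathlib

section
/- Assume monotonicity. Then for every g ∈ {0,1,...,J}, e_g(X) = p_{J−g+1}(X) − p_{J−g}(X) P-almost surely; equivalently, for every z ∈ {1,...,J}, p_z(X) = Σ_{g=J−z+1}^J e_g(X) P-almost surely. -/
open MeasureTheory ProbabilityTheory

noncomputable section

namespace TruncationByDeath

variable {Ω : Type*} {𝒳 : Type*} [MeasurableSpace Ω] [MeasurableSpace 𝒳]

/-- The σ-algebra on `Ω` generated by the covariate map `X`. -/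
def mX (X : Ω → 𝒳) : MeasurableSpace Ω := MeasurableSpace.comap X inferInstance

/-- Real-valued indicator of the event `{Z = z}`. -/
def indic (Z : Ω → ℕ) (z : ℕ) : Ω → ℝ := fun ω => if Z ω = z then 1 else 0

/-- Observed survival status `S := ∑_z 1(Z=z) ⬝ S_z`. -/
def Sobs (J : ℕ) (Z : Ω → ℕ) (S : ℕ → Ω → ℝ) : Ω → ℝ :=
  fun ω => ∑ z ∈ Finset.Icc 1 J, indic Z z ω * S z ω

/-- Observed outcome `Y := ∑_z 1(Z=z) ⬝ Y_z`. -/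
def Yobs (J : ℕ) (Z : Ω → ℕ) (Y : ℕ → Ω → ℝ) : Ω → ℝ :=
  fun ω => ∑ z ∈ Finset.Icc 1 J, indic Z z ω * Y z ω

/-- Principal score `p_z(X) := E[S_z | σ(X)]`, with conventions `p_0 := 0` and `p_{J+1} := 1`. -/
def pscore (P : Measure Ω) (X : Ω → 𝒳) (S : ℕ → Ω → ℝ) (J : ℕ) (z : ℕ) : Ω → ℝ :=
  if z = 0 then fun _ => 0 else if z = J + 1 then fun _ => 1 else P[S z | mX X]

/-- Treatment probability `π_z := P(Z = z)`. -/
def piZ (P : Measure Ω) (Z : Ω → ℕ) (z : ℕ) : ℝ := (P {ω | Z ω = z}).toReal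

/-- Principal stratum variable `G := ∑_{z=1}^J S_z`. -/
def Gsum (J : ℕ) (S : ℕ → Ω → ℝ) : Ω → ℝ := fun ω => ∑ z ∈ Finset.Icc 1 J, S z ω

/-- Real-valued indicator of the event `{G = g}`. -/
def indG (J : ℕ) (S : ℕ → Ω → ℝ) (g : ℕ) : Ω → ℝ :=
  Set.indicator {ω | Gsum J S ω = (g : ℝ)} (fun _ => (1 : ℝ))

/-- Principal score of the stratum `g` : `e_g(X) := E[1(G=g) | σ(X)]`. -/
def eg (P : Measure Ω) (X : Ω → 𝒳) (J : ℕ) (S : ℕ → Ω → ℝ) (g : ℕ) : Ω → ℝ :=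
  P[indG J S g | mX X]

/-- Basic setup: measurability, ranges, values and integrability of the primitives. -/
structure Setup (P : Measure Ω) (J : ℕ) (X : Ω → 𝒳) (Z : Ω → ℕ)
    (S Y : ℕ → Ω → ℝ) : Prop where
  hJ : 2 ≤ J
  hX : Measurable X
  hZ : Measurable Z
  hZr : ∀ ω, Z ω ∈ Finset.Icc 1 J
  hSm : ∀ z, Measurable (S z)
  hS01 : ∀ z ω, S z ω = 0 ∨ S z ω = 1
  hYm : ∀ z, Measurable (Y z)
  hYint : ∀ z, Integrable (Y z) P

/-- Randomization : `Z` is independent of `(X, S_1,…,S_J, Y_1,…,Y_J)` and `π_z > 0` for all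
`z ∈ {1,…,J}`. -/
def Randomization (P : Measure Ω) (J : ℕ) (X : Ω → 𝒳) (Z : Ω → ℕ)
    (S Y : ℕ → Ω → ℝ) : Prop :=
  IndepFun Z (fun ω => (X ω, fun z => S z ω, fun z => Y z ω)) P ∧
    ∀ z ∈ Finset.Icc 1 J, 0 < piZ P Z z

/-- Monotonicity : `S_{z'} ≤ S_z` a.s. whenever `z' ≤ z`. -/
def Monotonicity (P : Measure Ω) (J : ℕ) (S : ℕ → Ω → ℝ) : Prop :=
  ∀ z ∈ Finset.Icc 1 J, ∀ z' ∈ Finset.Icc 1 J, z' ≤ z → ∀ᵐ ω ∂P, S z' ω ≤ S z ω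

/-- Principal ignorability. -/
def PrincipalIgnorability (P : Measure Ω) (J : ℕ) (X : Ω → 𝒳)
    (S Y : ℕ → Ω → ℝ) : Prop :=
  ∀ z ∈ Finset.Icc 1 J, ∀ g ∈ Finset.Icc (J - z + 1) J, ∀ g' ∈ Finset.Icc (J - z + 1) J,
    (fun ω => (P[fun ω' => Y z ω' * indG J S g ω' | mX X]) ω * eg P X J S g' ω)
      =ᵐ[P] fun ω => (P[fun ω' => Y z ω' * indG J S g' ω' | mX X]) ω * eg P X J S g ω

/-- Positivity : the principal scores are uniformly bounded away from zero. -/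
def Positivity (P : Measure Ω) (J : ℕ) (X : Ω → 𝒳) (S : ℕ → Ω → ℝ) : Prop :=
  ∃ c : ℝ, 0 < c ∧ ∀ z ∈ Finset.Icc 1 J, ∀ᵐ ω ∂P, c ≤ pscore P X S J z ω

section Aux

/-- Extended survival indicators, matching the conventions of `pscore`. -/
def Sext (J : ℕ) (S : ℕ → Ω → ℝ) (z : ℕ) : Ω → ℝ :=
  if z = 0 then fun _ => 0 else if z = J + 1 then fun _ => 1 else S z

lemma condexp_Sext (P : Measure Ω) [IsProbabilityMeasure P] (J : ℕ) (X : Ω → 𝒳)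
    (S : ℕ → Ω → ℝ) (hX : Measurable X) (z : ℕ) :
    P[Sext J S z | mX X] =ᵐ[P] pscore P X S J z := by
  unfold Sext pscore
  split_ifs with h1 h2
  · rw [show (fun _ : Ω => (0 : ℝ)) = (0 : Ω → ℝ) from rfl, condExp_zero]
  · exact Filter.EventuallyEq.of_eq (condExp_const (m := mX X) hX.comap_le (1 : ℝ))
  · exact Filter.EventuallyEq.rfl

lemma Sext_int (P : Measure Ω) [IsProbabilityMeasure P] (J : ℕ)
    (S : ℕ → Ω → ℝ) (hSm : ∀ z, Measurable (S z)) (hS01 : ∀ z ω, S z ω = 0 ∨ S z ω = 1)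
    (z : ℕ) : Integrable (Sext J S z) P := by
  unfold Sext
  split_ifs with h1 h2
  · exact integrable_const 0
  · exact integrable_const 1
  · refine (integrable_const (1 : ℝ)).mono' (hSm z).aestronglyMeasurable ?_
    filter_upwards with ω
    rcases hS01 z ω with h | h <;> simp [h]

/-- Pointwise combinatorial key lemma. -/
lemma indicator_key (J : ℕ) (a : ℕ → ℝ) (ha0 : a 0 = 0) (haJ : a (J + 1) = 1)
    (h01 : ∀ z, z ≤ J + 1 → a z = 0 ∨ a z = 1)
    (hmono : ∀ z' z, z' ≤ z → z ≤ J + 1 → a z' ≤ a z)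
    (g : ℕ) (hg : g ≤ J) :
    (if (∑ z ∈ Finset.Ioc 0 J, a z) = (g : ℝ) then (1 : ℝ) else 0)
      = a (J - g + 1) - a (J - g) := by
  set m := J - g with hm
  have hmJ : m ≤ J := Nat.sub_le _ _
  have hcast : (m : ℝ) = (J : ℝ) - (g : ℝ) := by
    rw [hm, Nat.cast_sub hg]
  have hnn : ∀ z, z ≤ J + 1 → 0 ≤ a z := by
    intro z hz
    rcases h01 z hz with h | h <;> simp [h]
  have hle1 : ∀ z, z ≤ J + 1 → a z ≤ 1 := by
    intro z hz
    rcases h01 z hz with h | h <;> simp [h]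
  -- upper bound when a k = 0
  have hub : ∀ k, k ≤ J → a k = 0 → (∑ z ∈ Finset.Ioc 0 J, a z) ≤ (J : ℝ) - (k : ℝ) := by
    intro k hk hak
    rw [← Finset.sum_Ioc_consecutive (fun z => a z) (Nat.zero_le k) hk]
    have h1 : (∑ z ∈ Finset.Ioc 0 k, a z) ≤ 0 := by
      apply Finset.sum_nonpos
      intro z hz
      rw [Finset.mem_Ioc] at hz
      calc a z ≤ a k := hmono z k hz.2 (by omega)
        _ = 0 := hak
    have h2 : (∑ z ∈ Finset.Ioc k J, a z) ≤ (J : ℝ) - (k : ℝ) := by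
      calc (∑ z ∈ Finset.Ioc k J, a z) ≤ ∑ z ∈ Finset.Ioc k J, (1 : ℝ) := by
            apply Finset.sum_le_sum
            intro z hz
            rw [Finset.mem_Ioc] at hz
            exact hle1 z (by omega)
        _ = (J - k : ℕ) := by rw [Finset.sum_const, Nat.card_Ioc]; simp
        _ = (J : ℝ) - (k : ℝ) := by rw [Nat.cast_sub hk]
    linarith
  -- lower bound when a k = 1, 1 ≤ k ≤ J
  have hlb : ∀ k, 1 ≤ k → k ≤ J → a k = 1 →
      (J : ℝ) - (k : ℝ) + 1 ≤ (∑ z ∈ Finset.Ioc 0 J, a z) := by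
    intro k hk1 hk hak
    rw [← Finset.sum_Ioc_consecutive (fun z => a z) (Nat.zero_le (k - 1)) (by omega)]
    have h1 : (0 : ℝ) ≤ ∑ z ∈ Finset.Ioc 0 (k - 1), a z := by
      apply Finset.sum_nonneg
      intro z hz
      rw [Finset.mem_Ioc] at hz
      exact hnn z (by omega)
    have h2 : (J : ℝ) - (k : ℝ) + 1 ≤ ∑ z ∈ Finset.Ioc (k - 1) J, a z := by
      calc (J : ℝ) - (k : ℝ) + 1 = ((J - (k - 1) : ℕ) : ℝ) := by
            rw [Nat.cast_sub (by omega)]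
            push_cast [Nat.cast_sub (by omega : 1 ≤ k)]
            ring
        _ = ∑ z ∈ Finset.Ioc (k - 1) J, (1 : ℝ) := by
            rw [Finset.sum_const, Nat.card_Ioc]; simp
        _ ≤ ∑ z ∈ Finset.Ioc (k - 1) J, a z := by
            apply Finset.sum_le_sum
            intro z hz
            rw [Finset.mem_Ioc] at hz
            have : a k ≤ a z := hmono k z (by omega) (by omega)
            rw [hak] at this
            linarith
    linarith
  have hsum_nn : (0 : ℝ) ≤ ∑ z ∈ Finset.Ioc 0 J, a z := by
    apply Finset.sum_nonneg
    intro z hz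
    rw [Finset.mem_Ioc] at hz
    exact hnn z (by omega)
  rcases h01 m (by omega) with ham | ham
  · rcases h01 (m + 1) (by omega) with ham1 | ham1
    · -- a m = 0, a (m+1) = 0 : sum < g
      have hm1J : m + 1 ≤ J := by
        by_contra h
        have : m + 1 = J + 1 := by omega
        rw [this, haJ] at ham1; norm_num at ham1
      have hg1 : 1 ≤ g := by omega
      have := hub (m + 1) hm1J ham1
      rw [if_neg, ham1, ham, sub_zero]
      push_cast at this ⊢
      intro hEq
      rw [hEq] at this
      rw [hcast] at this
      linarith [this]
    · -- a m = 0, a (m+1) = 1 : sum = g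
      have hle : (∑ z ∈ Finset.Ioc 0 J, a z) ≤ (J : ℝ) - (m : ℝ) := hub m hmJ ham
      have hge : (J : ℝ) - (m : ℝ) ≤ ∑ z ∈ Finset.Ioc 0 J, a z := by
        rcases Nat.lt_or_ge m J with hlt | hge'
        · have := hlb (m + 1) (by omega) (by omega) ham1
          push_cast at this
          linarith
        · have : m = J := by omega
          rw [this]; simpa using hsum_nn
      have : (∑ z ∈ Finset.Ioc 0 J, a z) = (g : ℝ) := by
        rw [hcast] at hle hge; linarith
      rw [if_pos this, ham1, ham, sub_zero]
  · -- a m = 1 : sum > g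
    have hm1 : 1 ≤ m := by
      by_contra h
      have : m = 0 := by omega
      rw [this, ha0] at ham; norm_num at ham
    have ham1 : a (m + 1) = 1 := by
      have h1 := hmono m (m + 1) (by omega) (by omega)
      have h2 := hle1 (m + 1) (by omega)
      rw [ham] at h1; linarith
    have := hlb m hm1 hmJ ham
    rw [if_neg, ham1, ham, sub_self]
    intro hEq
    rw [hEq, hcast] at this
    linarith

lemma telescope_sum (J z : ℕ) (hzJ : z ≤ J) (f : ℕ → ℝ) :
    (∑ g ∈ Finset.Icc (J - z + 1) J, (f (J - g + 1) - f (J - g))) = f z - f 0 := by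
  have h : (∑ g ∈ Finset.Icc (J - z + 1) J, (f (J - g + 1) - f (J - g)))
      = ∑ k ∈ Finset.range z, (f (k + 1) - f k) := by
    apply Finset.sum_nbij' (fun g => J - g) (fun k => J - k)
    · intro g hg
      rw [Finset.mem_Icc] at hg
      rw [Finset.mem_range]
      omega
    · intro k hk
      rw [Finset.mem_range] at hk
      rw [Finset.mem_Icc]
      omega
    · intro g hg
      rw [Finset.mem_Icc] at hg
      omega
    · intro k hk
      rw [Finset.mem_range] at hk
      omega
    · intro g _
      rfl
  rw [h, Finset.sum_range_sub]

end Aux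

lemma part1_core (P : Measure Ω) [IsProbabilityMeasure P] (J : ℕ)
    (X : Ω → 𝒳) (Z : Ω → ℕ) (S Y : ℕ → Ω → ℝ)
    (hset : Setup P J X Z S Y)
    (hmono : Monotonicity P J S) (g : ℕ) (hg : g ≤ J) :
    eg P X J S g =ᵐ[P]
      fun ω => pscore P X S J (J - g + 1) ω - pscore P X S J (J - g) ω := by
  have hchain : ∀ᵐ ω ∂P, ∀ z, ∀ z', z ∈ Finset.Icc 1 J → z' ∈ Finset.Icc 1 J →
      z' ≤ z → S z' ω ≤ S z ω := by
    rw [ae_all_iff]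
    intro z
    rw [ae_all_iff]
    intro z'
    by_cases h : z ∈ Finset.Icc 1 J ∧ z' ∈ Finset.Icc 1 J ∧ z' ≤ z
    · filter_upwards [hmono z h.1 z' h.2.1 h.2.2] with ω hω _ _ _
      exact hω
    · filter_upwards with ω h1 h2 h3
      exact absurd ⟨h1, h2, h3⟩ h
  have hae : indG J S g =ᵐ[P]
      fun ω => Sext J S (J - g + 1) ω - Sext J S (J - g) ω := by
    filter_upwards [hchain] with ω hω
    have h01e : ∀ z, z ≤ J + 1 → Sext J S z ω = 0 ∨ Sext J S z ω = 1 := by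
      intro z _
      unfold Sext
      split_ifs with h1 h2
      · exact Or.inl rfl
      · exact Or.inr rfl
      · exact hset.hS01 z ω
    have hmonoe : ∀ z' z, z' ≤ z → z ≤ J + 1 → Sext J S z' ω ≤ Sext J S z ω := by
      intro z' z hzz hz
      have hnn : ∀ u, u ≤ J + 1 → 0 ≤ Sext J S u ω := by
        intro u hu
        rcases h01e u hu with h | h <;> simp [h]
      have hl1 : ∀ u, u ≤ J + 1 → Sext J S u ω ≤ 1 := by
        intro u hu
        rcases h01e u hu with h | h <;> simp [h]
      by_cases hz'0 : z' = 0
      · have h0 : Sext J S z' ω = 0 := by simp [Sext, hz'0]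
        rw [h0]; exact hnn z hz
      · by_cases hzJ1 : z = J + 1
        · have h1 : Sext J S z ω = 1 := by simp [Sext, hzJ1]
          rw [h1]; exact hl1 z' (by omega)
        · have hz' : Sext J S z' ω = S z' ω := by
            have hz'J1 : z' ≠ J + 1 := by omega
            simp [Sext, hz'0, hz'J1]
          have hzz' : Sext J S z ω = S z ω := by
            have hz0 : z ≠ 0 := by omega
            simp [Sext, hz0, hzJ1]
          rw [hz', hzz']
          exact hω z z' (by rw [Finset.mem_Icc]; omega)
            (by rw [Finset.mem_Icc]; omega) hzz
    have key := indicator_key J (fun n => Sext J S n ω)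
      (by simp [Sext]) (by simp [Sext]) h01e hmonoe g hg
    have hGsum : Gsum J S ω = ∑ z ∈ Finset.Ioc 0 J, Sext J S z ω := by
      unfold Gsum
      rw [← Finset.Icc_add_one_left_eq_Ioc]
      apply Finset.sum_congr rfl
      intro z hz
      rw [Finset.mem_Icc] at hz
      have hz0 : z ≠ 0 := by omega
      have hzJ1 : z ≠ J + 1 := by omega
      simp [Sext, hz0, hzJ1]
    have hind : indG J S g ω
        = if (∑ z ∈ Finset.Ioc 0 J, Sext J S z ω) = (g : ℝ) then (1 : ℝ) else 0 := by
      unfold indG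
      rw [Set.indicator_apply]
      simp only [Set.mem_setOf_eq, hGsum]
    rw [hind, key]
  calc eg P X J S g
      =ᵐ[P] P[fun ω => Sext J S (J - g + 1) ω - Sext J S (J - g) ω | mX X] :=
        condExp_congr_ae hae
    _ =ᵐ[P] fun ω => (P[Sext J S (J - g + 1) | mX X]) ω - (P[Sext J S (J - g) | mX X]) ω :=
        condExp_sub (Sext_int P J S hset.hSm hset.hS01 (J - g + 1))
          (Sext_int P J S hset.hSm hset.hS01 (J - g)) (mX X)
    _ =ᵐ[P] fun ω => pscore P X S J (J - g + 1) ω - pscore P X S J (J - g) ω := by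
        filter_upwards [condexp_Sext P J X S hset.hX (J - g + 1),
          condexp_Sext P J X S hset.hX (J - g)] with ω h1 h2
        rw [h1, h2]

/-- Under monotonicity, `e_g(X) = p_{J−g+1}(X) − p_{J−g}(X)` a.s. for every
`g ∈ {0,…,J}`; equivalently, `p_z(X) = ∑_{g=J−z+1}^J e_g(X)` a.s. for every `z ∈ {1,…,J}`. -/
theorem statement1 (P : Measure Ω) [IsProbabilityMeasure P] (J : ℕ)
    (X : Ω → 𝒳) (Z : Ω → ℕ) (S Y : ℕ → Ω → ℝ)
    (hset : Setup P J X Z S Y)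
    (hmono : Monotonicity P J S) :
    (∀ g ∈ Finset.Icc 0 J,
      eg P X J S g =ᵐ[P]
        fun ω => pscore P X S J (J - g + 1) ω - pscore P X S J (J - g) ω) ∧
    (∀ z ∈ Finset.Icc 1 J,
      pscore P X S J z =ᵐ[P]
        fun ω => ∑ g ∈ Finset.Icc (J - z + 1) J, eg P X J S g ω) := by
  have part1 : ∀ g ∈ Finset.Icc 0 J,
      eg P X J S g =ᵐ[P]
        fun ω => pscore P X S J (J - g + 1) ω - pscore P X S J (J - g) ω := by
    intro g hg
    rw [Finset.mem_Icc] at hg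
    exact part1_core P J X Z S Y hset hmono g hg.2
  refine ⟨part1, ?_⟩
  intro z hz
  rw [Finset.mem_Icc] at hz
  have hall : ∀ᵐ ω ∂P, ∀ g, g ∈ Finset.Icc (J - z + 1) J →
      eg P X J S g ω = pscore P X S J (J - g + 1) ω - pscore P X S J (J - g) ω := by
    rw [ae_all_iff]
    intro g
    by_cases hg : g ∈ Finset.Icc (J - z + 1) J
    · have hg' : g ∈ Finset.Icc 0 J := by
        rw [Finset.mem_Icc] at hg ⊢; omega
      filter_upwards [part1 g hg'] with ω hω _
      exact hω
    · filter_upwards with ω h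
      exact absurd h hg
  filter_upwards [hall] with ω hω
  have hs : (∑ g ∈ Finset.Icc (J - z + 1) J, eg P X J S g ω)
      = ∑ g ∈ Finset.Icc (J - z + 1) J,
          (pscore P X S J (J - g + 1) ω - pscore P X S J (J - g) ω) :=
    Finset.sum_congr rfl fun g hg => hω g hg
  show pscore P X S J z ω = _
  rw [hs, telescope_sum J z hz.2 (fun k => pscore P X S J k ω)]
  have h0 : pscore P X S J 0 ω = 0 := by simp [pscore]
  rw [h0, sub_zero]

end TruncationByDeath
end
end

section
/- Under randomization and monotonicity, for every g ∈ {1,...,J} and every bounded measurable h : 𝒳 → ℝ, E[(S·1(Z=J−g+1)/π_{J−g+1} − S·1(Z=J−g)/π_{J−g})·h(X)] = E[h(X)·1(G=g)], where for g = J the term S·1(Z=0)/π_0 is taken to be 0. -/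
open MeasureTheory ProbabilityTheory

noncomputable section

namespace TruncationByDeath

variable {Ω : Type*} {𝒳 : Type*} [MeasurableSpace Ω] [MeasurableSpace 𝒳]

/-- Weighted survival term `S·1(Z=w)/π_w`, with the convention that it is `0` for `w = 0`. -/
def wterm (P : Measure Ω) (J : ℕ) (Z : Ω → ℕ) (S : ℕ → Ω → ℝ) (w : ℕ) : Ω → ℝ :=
  if w = 0 then fun _ => 0
  else fun ω => Sobs J Z S ω * indic Z w ω / piZ P Z w

/-- A bounded measurable function is integrable w.r.t. a probability measure. -/
lemma integrable_of_bdd {P : Measure Ω} [IsProbabilityMeasure P] {f : Ω → ℝ}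
    (hf : Measurable f) {C : ℝ} (hb : ∀ ω, |f ω| ≤ C) : Integrable f P :=
  (integrable_const C).mono' hf.aestronglyMeasurable (ae_of_all _ hb)

lemma indic_measurable {Z : Ω → ℕ} (hZ : Measurable Z) (w : ℕ) :
    Measurable (indic Z w) := by
  unfold indic
  exact Measurable.ite (hZ (measurableSet_singleton w)) measurable_const measurable_const

/-- Key integral identity: `E[wterm_w · h(X)] = E[S_w · h(X)]` for `w ∈ {1,…,J}`. -/
lemma wterm_mul_integral (P : Measure Ω) [IsProbabilityMeasure P] (J : ℕ)
    (X : Ω → 𝒳) (Z : Ω → ℕ) (S Y : ℕ → Ω → ℝ)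
    (hset : Setup P J X Z S Y) (hrand : Randomization P J X Z S Y)
    (w : ℕ) (hw : w ∈ Finset.Icc 1 J) (h : 𝒳 → ℝ) (hh : Measurable h)
    {C : ℝ} (hC : ∀ x, |h x| ≤ C) :
    Integrable (fun ω => wterm P J Z S w ω * h (X ω)) P ∧
      ∫ ω, wterm P J Z S w ω * h (X ω) ∂P = ∫ ω, S w ω * h (X ω) ∂P := by
  have hw0 : w ≠ 0 := by
    have := (Finset.mem_Icc.mp hw).1; omega
  have hpi : 0 < piZ P Z w := hrand.2 w hw
  have hSabs : ∀ z ω, |S z ω| ≤ 1 := by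
    intro z ω; rcases hset.hS01 z ω with h' | h' <;> simp [h']
  have hfb : ∀ ω, |S w ω * h (X ω)| ≤ |C| := by
    intro ω
    rw [abs_mul]
    calc |S w ω| * |h (X ω)| ≤ 1 * |C| :=
      mul_le_mul (hSabs w ω) ((hC _).trans (le_abs_self C)) (abs_nonneg _) zero_le_one
    _ = |C| := one_mul _
  have hobs : ∀ ω, Sobs J Z S ω * indic Z w ω = indic Z w ω * S w ω := by
    intro ω
    by_cases hz : Z ω = w
    · have hS : Sobs J Z S ω = S w ω := by
        unfold Sobs
        rw [Finset.sum_eq_single w]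
        · simp [indic, hz]
        · intro b hb hbw
          simp [indic, hz, Ne.symm hbw]
        · intro hwm; exact absurd hw hwm
      simp [hS, indic, hz, mul_comm]
    · simp [indic, hz]
  have heq : ∀ ω, wterm P J Z S w ω * h (X ω)
      = (piZ P Z w)⁻¹ * (indic Z w ω * (S w ω * h (X ω))) := by
    intro ω
    simp only [wterm, if_neg hw0]
    rw [div_eq_mul_inv, hobs ω]; ring
  have hmf : Measurable fun ω => S w ω * h (X ω) := (hset.hSm w).mul (hh.comp hset.hX)
  have hint2 : Integrable (fun ω => S w ω * h (X ω)) P := integrable_of_bdd hmf hfb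
  have hindabs : ∀ ω, |indic Z w ω| ≤ 1 := by
    intro ω; unfold indic; split <;> simp
  have hint1 : Integrable (indic Z w) P :=
    integrable_of_bdd (indic_measurable hset.hZ w) hindabs
  have hindep : IndepFun (indic Z w) (fun ω => S w ω * h (X ω)) P := by
    have h1 : Measurable (fun n : ℕ => if n = w then (1 : ℝ) else 0) :=
      Measurable.ite (measurableSet_eq) measurable_const measurable_const
    have h2 : Measurable (fun p : 𝒳 × (ℕ → ℝ) × (ℕ → ℝ) => p.2.1 w * h p.1) :=
      ((measurable_pi_apply w).comp (measurable_fst.comp measurable_snd)).mul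
        (hh.comp measurable_fst)
    exact hrand.1.comp h1 h2
  have hprod : Integrable (fun ω => indic Z w ω * (S w ω * h (X ω))) P := by
    refine integrable_of_bdd ((indic_measurable hset.hZ w).mul hmf) (C := |C|) ?_
    intro ω
    rw [abs_mul]
    calc |indic Z w ω| * |S w ω * h (X ω)| ≤ 1 * |C| :=
      mul_le_mul (hindabs ω) (hfb ω) (abs_nonneg _) zero_le_one
    _ = |C| := one_mul _
  have hindic_int : ∫ ω, indic Z w ω ∂P = piZ P Z w := by
    have hs : MeasurableSet {ω | Z ω = w} := hset.hZ (measurableSet_singleton w)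
    have hind : (fun ω => indic Z w ω)
        = Set.indicator {ω | Z ω = w} (fun _ => (1 : ℝ)) := by
      funext ω; simp [indic, Set.indicator_apply, Set.mem_setOf_eq]
    rw [hind, integral_indicator_const _ hs]
    simp [piZ, measureReal_def]
  have hfun : (fun ω => wterm P J Z S w ω * h (X ω))
      = fun ω => (piZ P Z w)⁻¹ * (indic Z w ω * (S w ω * h (X ω))) := funext heq
  constructor
  · rw [hfun]; exact hprod.const_mul _
  · have hmul := hindep.integral_mul_eq_mul_integral hint1.aestronglyMeasurable hint2.aestronglyMeasurable
    have hre : (fun a => indic Z w a * (S w a * h (X a)))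
        = indic Z w * fun ω => S w ω * h (X ω) := rfl
    rw [hfun, integral_const_mul, hre, hmul, hindic_int, ← mul_assoc,
      inv_mul_cancel₀ hpi.ne', one_mul]

/-- Under monotonicity, `1(G = g) = S_{J-g+1} - S_{J-g}` a.s. (with `S_0 := 0`). -/
lemma indG_ae (P : Measure Ω) [IsProbabilityMeasure P] (J : ℕ) (S : ℕ → Ω → ℝ)
    (hS01 : ∀ z ω, S z ω = 0 ∨ S z ω = 1) (hmono : Monotonicity P J S)
    (g : ℕ) (hg : g ∈ Finset.Icc 1 J) :
    ∀ᵐ ω ∂P, indG J S g ω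
      = S (J - g + 1) ω - (if g = J then 0 else S (J - g) ω) := by
  have hg1 : 1 ≤ g := (Finset.mem_Icc.mp hg).1
  have hgJ : g ≤ J := (Finset.mem_Icc.mp hg).2
  have hchain : ∀ᵐ ω ∂P, ∀ z : ℕ, ∀ z' : ℕ,
      z ∈ Finset.Icc 1 J → z' ∈ Finset.Icc 1 J → z' ≤ z → S z' ω ≤ S z ω := by
    rw [ae_all_iff]; intro z; rw [ae_all_iff]; intro z'
    by_cases hc : z ∈ Finset.Icc 1 J ∧ z' ∈ Finset.Icc 1 J ∧ z' ≤ z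
    · filter_upwards [hmono z hc.1 z' hc.2.1 hc.2.2] with ω hω _ _ _
      exact hω
    · exact Filter.Eventually.of_forall fun ω h1 h2 h3 => absurd ⟨h1, h2, h3⟩ hc
  filter_upwards [hchain] with ω hω
  have haJ : J - g + g = J := Nat.sub_add_cancel hgJ
  set a := J - g with ha
  have hmon : ∀ z z' : ℕ, 1 ≤ z' → z' ≤ z → z ≤ J → S z' ω ≤ S z ω := by
    intro z z' h1 h2 h3
    exact hω z z' (Finset.mem_Icc.mpr ⟨by omega, h3⟩) (Finset.mem_Icc.mpr ⟨h1, by omega⟩) h2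
  have h0le : ∀ z, 0 ≤ S z ω := fun z => by rcases hS01 z ω with h | h <;> simp [h]
  have hle1 : ∀ z, S z ω ≤ 1 := fun z => by rcases hS01 z ω with h | h <;> simp [h]
  have hIccIoc : Finset.Icc 1 J = Finset.Ioc 0 J := by
    ext x; simp [Finset.mem_Icc, Finset.mem_Ioc]; omega
  have hsplit : ∀ b : ℕ, b ≤ J → Gsum J S ω
      = (∑ z ∈ Finset.Ioc 0 b, S z ω) + ∑ z ∈ Finset.Ioc b J, S z ω := by
    intro b hb
    rw [Gsum, hIccIoc]
    exact (Finset.sum_Ioc_consecutive _ (Nat.zero_le b) hb).symm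
  have hIoc_eq : ∀ b c : ℕ, (∀ z, b < z → z ≤ c → S z ω = 1) →
      ∑ z ∈ Finset.Ioc b c, S z ω = ((c - b : ℕ) : ℝ) := by
    intro b c hval
    rw [Finset.sum_congr rfl
      (fun z hz => hval z (Finset.mem_Ioc.mp hz).1 (Finset.mem_Ioc.mp hz).2)]
    simp [Nat.card_Ioc]
  have hIoc_zero : ∀ b c : ℕ, (∀ z, b < z → z ≤ c → S z ω = 0) →
      ∑ z ∈ Finset.Ioc b c, S z ω = 0 := by
    intro b c hval
    rw [Finset.sum_congr rfl
      (fun z hz => hval z (Finset.mem_Ioc.mp hz).1 (Finset.mem_Ioc.mp hz).2)]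
    simp
  have hindG : indG J S g ω = if Gsum J S ω = (g : ℝ) then 1 else 0 := by
    simp [indG, Set.indicator_apply, Set.mem_setOf_eq]
  rcases hS01 (a + 1) ω with hA | hA
  · -- `S_{a+1}(ω) = 0` : then `G < g`, both sides vanish.
    have hz0 : ∀ z, 0 < z → z ≤ a + 1 → S z ω = 0 := by
      intro z h1 h2
      have hle : S z ω ≤ S (a + 1) ω := hmon (a + 1) z h1 h2 (by omega)
      rcases hS01 z ω with h | h
      · exact h
      · exfalso; rw [h, hA] at hle; linarith
    have hlt : Gsum J S ω < (g : ℝ) := by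
      rw [hsplit (a + 1) (by omega), hIoc_zero 0 (a + 1) (fun z h1 h2 => hz0 z h1 h2),
        zero_add]
      have hb : ∑ z ∈ Finset.Ioc (a + 1) J, S z ω ≤ ((J - (a + 1) : ℕ) : ℝ) := by
        calc ∑ z ∈ Finset.Ioc (a + 1) J, S z ω ≤ ∑ z ∈ Finset.Ioc (a + 1) J, 1 :=
          Finset.sum_le_sum fun z _ => hle1 z
        _ = ((J - (a + 1) : ℕ) : ℝ) := by simp [Nat.card_Ioc]
      have hlt' : ((J - (a + 1) : ℕ) : ℝ) < (g : ℝ) := by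
        exact_mod_cast (by omega : J - (a + 1) < g)
      linarith
    rw [hindG, if_neg (by intro hgg; rw [hgg] at hlt; exact lt_irrefl _ hlt), hA]
    by_cases hgJ' : g = J
    · simp [hgJ']
    · rw [if_neg hgJ', hz0 a (by omega) (by omega)]; ring
  · -- `S_{a+1}(ω) = 1`
    have hz1 : ∀ z, a < z → z ≤ J → S z ω = 1 := by
      intro z h1 h2
      have hle : S (a + 1) ω ≤ S z ω := hmon z (a + 1) (by omega) h1 h2
      rcases hS01 z ω with h | h
      · exfalso; rw [h, hA] at hle; linarith
      · exact h
    by_cases hgJ' : g = J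
    · have hGg : Gsum J S ω = (g : ℝ) := by
        rw [Gsum, hIccIoc, hIoc_eq 0 J (fun z h1 h2 => hz1 z (by omega) h2)]
        exact_mod_cast congrArg (Nat.cast (R := ℝ)) (by omega : J - 0 = g)
      rw [hindG, if_pos hGg, hA, if_pos hgJ']; ring
    · have ha1 : 1 ≤ a := by omega
      rcases hS01 a ω with hB | hB
      · -- `S_a(ω) = 0` : then `G = g` exactly.
        have hz0 : ∀ z, 0 < z → z ≤ a → S z ω = 0 := by
          intro z h1 h2
          have hle : S z ω ≤ S a ω := hmon a z h1 h2 (by omega)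
          rcases hS01 z ω with h | h
          · exact h
          · exfalso; rw [h, hB] at hle; linarith
        have hGg : Gsum J S ω = (g : ℝ) := by
          rw [hsplit a (by omega), hIoc_zero 0 a hz0, hIoc_eq a J hz1, zero_add]
          exact_mod_cast congrArg (Nat.cast (R := ℝ)) (by omega : J - a = g)
        rw [hindG, if_pos hGg, hA, if_neg hgJ', hB]; ring
      · -- `S_a(ω) = 1` : then `G > g`.
        have hz1' : ∀ z, a - 1 < z → z ≤ J → S z ω = 1 := by
          intro z h1 h2
          have hle : S a ω ≤ S z ω := hmon z a ha1 (by omega) h2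
          rcases hS01 z ω with h | h
          · exfalso; rw [h, hB] at hle; linarith
          · exact h
        have hgt : (g : ℝ) < Gsum J S ω := by
          rw [hsplit (a - 1) (by omega), hIoc_eq (a - 1) J hz1']
          have h1 : 0 ≤ ∑ z ∈ Finset.Ioc 0 (a - 1), S z ω :=
            Finset.sum_nonneg fun z _ => h0le z
          have hlt' : (g : ℝ) < ((J - (a - 1) : ℕ) : ℝ) := by
            exact_mod_cast (by omega : g < J - (a - 1))
          linarith
        rw [hindG, if_neg (by intro hgg; rw [hgg] at hgt; exact lt_irrefl _ hgt), hA,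
          if_neg hgJ', hB]; ring

/-- Under randomization and monotonicity, for every `g ∈ {1,…,J}` and every
bounded measurable `h`,
`E[(S·1(Z=J−g+1)/π_{J−g+1} − S·1(Z=J−g)/π_{J−g})·h(X)] = E[h(X)·1(G=g)]`,
with the convention that the term `S·1(Z=0)/π_0` is `0` (case `g = J`). -/
theorem statement2 (P : Measure Ω) [IsProbabilityMeasure P] (J : ℕ)
    (X : Ω → 𝒳) (Z : Ω → ℕ) (S Y : ℕ → Ω → ℝ)
    (hset : Setup P J X Z S Y)
    (hrand : Randomization P J X Z S Y)
    (hmono : Monotonicity P J S) :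
    ∀ g ∈ Finset.Icc 1 J, ∀ h : 𝒳 → ℝ, Measurable h → (∃ C, ∀ x, |h x| ≤ C) →
      ∫ ω, (wterm P J Z S (J - g + 1) ω - wterm P J Z S (J - g) ω) * h (X ω) ∂P
        = ∫ ω, h (X ω) * indG J S g ω ∂P := by
  intro g hg h hh hbd
  obtain ⟨C, hC⟩ := hbd
  have hg1 : 1 ≤ g := (Finset.mem_Icc.mp hg).1
  have hgJ : g ≤ J := (Finset.mem_Icc.mp hg).2
  have hup : J - g + 1 ∈ Finset.Icc 1 J := Finset.mem_Icc.mpr ⟨by omega, by omega⟩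
  obtain ⟨hint1, heq1⟩ := wterm_mul_integral P J X Z S Y hset hrand (J - g + 1) hup h hh hC
  have hSh_bd : ∀ z : ℕ, ∀ ω, |S z ω * h (X ω)| ≤ |C| := by
    intro z ω
    rw [abs_mul]
    have hS1 : |S z ω| ≤ 1 := by rcases hset.hS01 z ω with h' | h' <;> simp [h']
    calc |S z ω| * |h (X ω)| ≤ 1 * |C| :=
      mul_le_mul hS1 ((hC _).trans (le_abs_self C)) (abs_nonneg _) zero_le_one
    _ = |C| := one_mul _
  have hlow : Integrable (fun ω => wterm P J Z S (J - g) ω * h (X ω)) P ∧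
      ∫ ω, wterm P J Z S (J - g) ω * h (X ω) ∂P
        = ∫ ω, (if g = J then 0 else S (J - g) ω) * h (X ω) ∂P := by
    by_cases hgJ' : g = J
    · have ha0 : J - g = 0 := by omega
      have hz : (fun ω => wterm P J Z S (J - g) ω * h (X ω)) = fun _ => (0 : ℝ) := by
        funext ω; simp [ha0, wterm]
      constructor
      · rw [hz]; exact integrable_const 0
      · rw [hz]; simp [hgJ']
    · have hmem : J - g ∈ Finset.Icc 1 J := Finset.mem_Icc.mpr ⟨by omega, by omega⟩
      obtain ⟨hi, he⟩ := wterm_mul_integral P J X Z S Y hset hrand (J - g) hmem h hh hC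
      simp only [if_neg hgJ']
      exact ⟨hi, he⟩
  have hi1 : Integrable (fun ω => S (J - g + 1) ω * h (X ω)) P :=
    integrable_of_bdd ((hset.hSm _).mul (hh.comp hset.hX)) (hSh_bd _)
  have hi2 : Integrable (fun ω => (if g = J then 0 else S (J - g) ω) * h (X ω)) P := by
    by_cases hgJ' : g = J
    · simp only [if_pos hgJ', zero_mul]
      exact integrable_const 0
    · simp only [if_neg hgJ']
      exact integrable_of_bdd ((hset.hSm _).mul (hh.comp hset.hX)) (hSh_bd _)
  have hae := indG_ae P J S hset.hS01 hmono g hg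
  have hR : ∫ ω, h (X ω) * indG J S g ω ∂P
      = ∫ ω, S (J - g + 1) ω * h (X ω) ∂P
        - ∫ ω, (if g = J then 0 else S (J - g) ω) * h (X ω) ∂P := by
    have hstep : ∫ ω, h (X ω) * indG J S g ω ∂P
        = ∫ ω, (S (J - g + 1) ω * h (X ω)
            - (if g = J then 0 else S (J - g) ω) * h (X ω)) ∂P := by
      refine integral_congr_ae ?_
      filter_upwards [hae] with ω hω
      rw [hω]; ring
    rw [hstep, integral_sub hi1 hi2]
  have hsub : (fun ω => (wterm P J Z S (J - g + 1) ω - wterm P J Z S (J - g) ω) * h (X ω))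
      = fun ω => wterm P J Z S (J - g + 1) ω * h (X ω)
          - wterm P J Z S (J - g) ω * h (X ω) := by
    funext ω; ring
  rw [hsub, integral_sub hint1 hlow.1, heq1, hlow.2, hR]


end TruncationByDeath
end
end

section
/- Assume monotonicity and principal ignorability. Then for every z ∈ {1,...,J} and every g ∈ {J−z+1,...,J}, E[Y_z·1(G=g) | σ(X)]·p_z(X) = E[Y_z·S_z | σ(X)]·e_g(X) P-almost surely; that is, on the event {e_g(X) > 0, p_z(X) > 0} the conditional mean of Y_z within stratum g given X coincides with E[Y_z·S_z | σ(X)]/p_z(X). -/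
open MeasureTheory ProbabilityTheory

noncomputable section

namespace TruncationByDeath

variable {Ω : Type*} {𝒳 : Type*} [MeasurableSpace Ω] [MeasurableSpace 𝒳]

lemma Sz_eq_sum_indG {Ω : Type*} (J : ℕ) (S : ℕ → Ω → ℝ) (ω : Ω)
    (h01 : ∀ z, S z ω = 0 ∨ S z ω = 1)
    (hmono : ∀ a, ∀ b, a ∈ Finset.Icc 1 J → b ∈ Finset.Icc 1 J → a ≤ b → S a ω ≤ S b ω)
    {z : ℕ} (hz : z ∈ Finset.Icc 1 J) :
    S z ω = ∑ g' ∈ Finset.Icc (J - z + 1) J, indG J S g' ω := by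
  simp only [Finset.mem_Icc] at hz
  obtain ⟨hz1, hzJ⟩ := hz
  set T := (Finset.Icc 1 J).filter (fun z' => S z' ω = 1) with hT
  have hG : Gsum J S ω = (T.card : ℝ) := by
    rw [hT, Finset.card_filter, Nat.cast_sum]
    refine Finset.sum_congr rfl fun z' _ => ?_
    rcases h01 z' with h | h <;> simp [h]
  have hsum : ∑ g' ∈ Finset.Icc (J - z + 1) J, indG J S g' ω
      = if T.card ∈ Finset.Icc (J - z + 1) J then (1 : ℝ) else 0 := by
    have h1 : ∀ g', indG J S g' ω = if T.card = g' then (1 : ℝ) else 0 := by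
      intro g'
      unfold indG
      rw [Set.indicator_apply]
      simp [hG, Nat.cast_inj]
    rw [Finset.sum_congr rfl fun g' _ => h1 g', Finset.sum_ite_eq]
  rw [hsum]
  rcases h01 z with h0 | h1
  · rw [h0]
    symm
    rw [if_neg]
    intro hmem
    simp only [Finset.mem_Icc] at hmem
    have hsub : T ⊆ Finset.Icc (z + 1) J := by
      intro a ha
      rw [hT, Finset.mem_filter, Finset.mem_Icc] at ha
      rw [Finset.mem_Icc]
      refine ⟨?_, ha.1.2⟩
      by_contra hc
      push_neg at hc
      have := hmono a z (Finset.mem_Icc.mpr ha.1) (Finset.mem_Icc.mpr ⟨hz1, hzJ⟩) (by omega)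
      rw [ha.2, h0] at this
      linarith
    have := Finset.card_le_card hsub
    rw [Nat.card_Icc] at this
    omega
  · rw [h1]
    symm
    rw [if_pos]
    rw [Finset.mem_Icc]
    constructor
    · have hsub : Finset.Icc z J ⊆ T := by
        intro a ha
        rw [Finset.mem_Icc] at ha
        rw [hT, Finset.mem_filter, Finset.mem_Icc]
        refine ⟨⟨by omega, ha.2⟩, ?_⟩
        have := hmono z a (Finset.mem_Icc.mpr ⟨hz1, hzJ⟩)
          (Finset.mem_Icc.mpr ⟨by omega, ha.2⟩) ha.1
        rcases h01 a with h | h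
        · rw [h, h1] at this; linarith
        · exact h
      have := Finset.card_le_card hsub
      rw [Nat.card_Icc] at this
      omega
    · have hTsub : T ⊆ Finset.Icc 1 J := by
        rw [hT]; exact Finset.filter_subset _ _
      have := Finset.card_le_card hTsub
      rw [Nat.card_Icc] at this
      omega


/-- Under monotonicity and principal ignorability, for every `z ∈ {1,…,J}`
and `g ∈ {J−z+1,…,J}`,
`E[Y_z·1(G=g) | σ(X)] · p_z(X) = E[Y_z·S_z | σ(X)] · e_g(X)` `P`-almost surely. -/
theorem statement4 (P : Measure Ω) [IsProbabilityMeasure P] (J : ℕ)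
    (X : Ω → 𝒳) (Z : Ω → ℕ) (S Y : ℕ → Ω → ℝ)
    (hset : Setup P J X Z S Y)
    (hmono : Monotonicity P J S)
    (hPI : PrincipalIgnorability P J X S Y) :
    ∀ z ∈ Finset.Icc 1 J, ∀ g ∈ Finset.Icc (J - z + 1) J,
      (fun ω => (P[fun ω' => Y z ω' * indG J S g ω' | mX X]) ω * pscore P X S J z ω)
        =ᵐ[P] fun ω => (P[fun ω' => Y z ω' * S z ω' | mX X]) ω * eg P X J S g ω := by
  intro z hz g hg
  have hz' := Finset.mem_Icc.mp hz
  -- measurability and integrability facts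
  have hGm : Measurable (Gsum J S) := by
    unfold Gsum; exact Finset.measurable_sum _ fun z' _ => hset.hSm z'
  have hindGm : ∀ g', Measurable (indG J S g') := by
    intro g'
    unfold indG
    exact measurable_const.indicator (hGm (measurableSet_singleton _))
  have hindG_bd : ∀ g' ω, ‖indG J S g' ω‖ ≤ 1 := by
    intro g' ω
    unfold indG
    rw [Set.indicator_apply]
    split <;> simp
  have hindG_int : ∀ g', Integrable (indG J S g') P := by
    intro g'
    refine Integrable.mono' (integrable_const 1) (hindGm g').aestronglyMeasurable ?_
    filter_upwards with ω using hindG_bd g' ω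
  have hYind_int : ∀ g', Integrable (fun ω => Y z ω * indG J S g' ω) P := by
    intro g'
    have h := (hset.hYint z).bdd_mul (hindGm g').aestronglyMeasurable (c := 1) (ae_of_all _ fun ω => hindG_bd g' ω)
    exact h.congr (by filter_upwards with ω using mul_comm _ _)
  -- a.e. monotonicity, all pairs at once
  have hmae : ∀ᵐ ω ∂P, ∀ a, ∀ b, a ∈ Finset.Icc 1 J → b ∈ Finset.Icc 1 J → a ≤ b →
      S a ω ≤ S b ω := by
    rw [ae_all_iff]
    intro a
    rw [ae_all_iff]
    intro b
    by_cases h : a ∈ Finset.Icc 1 J ∧ b ∈ Finset.Icc 1 J ∧ a ≤ b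
    · filter_upwards [hmono b h.2.1 a h.1 h.2.2] with ω hω _ _ _ using hω
    · filter_upwards with ω ha hb hab
      exact absurd ⟨ha, hb, hab⟩ h
  -- a.e. decomposition of S z
  have hSeq : S z =ᵐ[P] fun ω => ∑ g' ∈ Finset.Icc (J - z + 1) J, indG J S g' ω := by
    filter_upwards [hmae] with ω hω
    exact Sz_eq_sum_indG J S ω (fun z' => hset.hS01 z' ω) hω hz
  have hYSeq : (fun ω => Y z ω * S z ω)
      =ᵐ[P] fun ω => ∑ g' ∈ Finset.Icc (J - z + 1) J, Y z ω * indG J S g' ω := by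
    filter_upwards [hSeq] with ω hω
    rw [hω, Finset.mul_sum]
  -- conditional expectation decompositions
  have hp : pscore P X S J z =ᵐ[P] fun ω => ∑ g' ∈ Finset.Icc (J - z + 1) J, eg P X J S g' ω := by
    have hz0 : z ≠ 0 := by omega
    have hzJ1 : z ≠ J + 1 := by omega
    unfold pscore
    rw [if_neg hz0, if_neg hzJ1]
    refine (condExp_congr_ae hSeq).trans ?_
    have hfe : (fun ω => ∑ g' ∈ Finset.Icc (J - z + 1) J, indG J S g' ω)
        = ∑ g' ∈ Finset.Icc (J - z + 1) J, indG J S g' := by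
      ext ω; rw [Finset.sum_apply]
    rw [hfe]
    refine (condExp_finsetSum (fun g' _ => hindG_int g') (mX X)).trans ?_
    filter_upwards with ω
    rw [Finset.sum_apply]
    rfl
  have hys : P[fun ω' => Y z ω' * S z ω' | mX X]
      =ᵐ[P] fun ω => ∑ g' ∈ Finset.Icc (J - z + 1) J,
        (P[fun ω' => Y z ω' * indG J S g' ω' | mX X]) ω := by
    refine (condExp_congr_ae hYSeq).trans ?_
    have hfe : (fun ω => ∑ g' ∈ Finset.Icc (J - z + 1) J, Y z ω * indG J S g' ω)
        = ∑ g' ∈ Finset.Icc (J - z + 1) J, (fun ω' => Y z ω' * indG J S g' ω') := by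
      ext ω; rw [Finset.sum_apply]
    rw [hfe]
    refine (condExp_finsetSum (fun g' _ => hYind_int g') (mX X)).trans ?_
    filter_upwards with ω
    rw [Finset.sum_apply]
  -- principal ignorability for all g' at once
  have hPI' : ∀ᵐ ω ∂P, ∀ g', g' ∈ Finset.Icc (J - z + 1) J →
      (P[fun ω' => Y z ω' * indG J S g ω' | mX X]) ω * eg P X J S g' ω
        = (P[fun ω' => Y z ω' * indG J S g' ω' | mX X]) ω * eg P X J S g ω := by
    rw [ae_all_iff]
    intro g'
    by_cases h : g' ∈ Finset.Icc (J - z + 1) J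
    · filter_upwards [hPI z hz g hg g' h] with ω hω _ using hω
    · filter_upwards with ω hg'
      exact absurd hg' h
  filter_upwards [hp, hys, hPI'] with ω hpω hysω hPIω
  rw [hpω, hysω, Finset.mul_sum, Finset.sum_mul]
  exact Finset.sum_congr rfl fun g' hg' => hPIω g' hg'


end TruncationByDeath
end
end

section
/- Under randomization, monotonicity, principal ignorability, and the positivity condition, for every z ∈ {1,...,J} and every g ∈ {J−z+1,...,J}: π_z·E[Y_z·1(G=g)] = E[((p_{J−g+1}(X) − p_{J−g}(X))/p_z(X))·Y·S·1(Z=z)]. Consequently, if P(G=g) > 0, the survivor average causal mean E[Y_z | G=g] equals E[((p_{J−g+1}(X) − p_{J−g}(X))/p_z(X))·Y·S·1(Z=z)]/(π_z·P(G=g)). -/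
open MeasureTheory ProbabilityTheory

noncomputable section

namespace TruncationByDeath

variable {Ω : Type*} {𝒳 : Type*} [MeasurableSpace Ω] [MeasurableSpace 𝒳]

/-- Counting lemma for a monotone `{0,1}`-valued sequence: the sum over `Icc 1 J` is a natural
number `n`, and `s k = 1` iff `k` is among the top `n` indices. -/
lemma keyCount (J : ℕ) (s : ℕ → ℝ) (h01 : ∀ k, s k = 0 ∨ s k = 1)
    (hmono : ∀ k ∈ Finset.Icc 1 J, ∀ k' ∈ Finset.Icc 1 J, k' ≤ k → s k' ≤ s k) :
    ∃ n, n ≤ J ∧ (∑ k ∈ Finset.Icc 1 J, s k) = (n : ℝ) ∧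
      ∀ k, 1 ≤ k → k ≤ J → (s k = 1 ↔ J + 1 ≤ n + k) := by
  classical
  set T := (Finset.Icc 1 J).filter (fun k => s k = 1) with hT
  refine ⟨T.card, ?_, ?_, ?_⟩
  · calc T.card ≤ (Finset.Icc 1 J).card := Finset.card_filter_le _ _
      _ = J := by rw [Nat.card_Icc]; omega
  · have h : ∀ k ∈ Finset.Icc 1 J, s k = if s k = 1 then (1:ℝ) else 0 := by
      intro k _; rcases h01 k with h | h <;> simp [h]
    rw [Finset.sum_congr rfl h, Finset.sum_boole]
  · intro k hk1 hkJ
    constructor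
    · intro hsk
      have hsub : Finset.Icc k J ⊆ T := by
        intro k' hk'
        simp only [Finset.mem_Icc] at hk'
        refine Finset.mem_filter.mpr ⟨Finset.mem_Icc.mpr ⟨le_trans hk1 hk'.1, hk'.2⟩, ?_⟩
        rcases h01 k' with h | h
        · exfalso
          have := hmono k' (Finset.mem_Icc.mpr ⟨le_trans hk1 hk'.1, hk'.2⟩) k
            (Finset.mem_Icc.mpr ⟨hk1, hkJ⟩) hk'.1
          rw [hsk, h] at this; linarith
        · exact h
      have hcard := Finset.card_le_card hsub
      rw [Nat.card_Icc] at hcard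
      omega
    · intro hn
      by_contra hsk
      have hs0 : s k = 0 := (h01 k).resolve_right hsk
      have hsub : T ⊆ Finset.Icc (k+1) J := by
        intro k' hk'
        obtain ⟨hk'm, hk's⟩ := Finset.mem_filter.mp hk'
        simp only [Finset.mem_Icc] at hk'm ⊢
        refine ⟨?_, hk'm.2⟩
        by_contra hlt
        push_neg at hlt
        have := hmono k (Finset.mem_Icc.mpr ⟨hk1, hkJ⟩) k' (Finset.mem_Icc.mpr hk'm) (by omega)
        rw [hs0, hk's] at this; linarith
      have hcard := Finset.card_le_card hsub
      rw [Nat.card_Icc] at hcard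
      omega

/-- On `{Z = z}` the observed outcome and survival collapse to the potential ones. -/
lemma obs_collapse (J : ℕ) (Z : Ω → ℕ) (S Y : ℕ → Ω → ℝ)
    (hZr : ∀ ω, Z ω ∈ Finset.Icc 1 J) (z : ℕ) (ω : Ω) :
    Yobs J Z Y ω * Sobs J Z S ω * indic Z z ω = Y z ω * S z ω * indic Z z ω := by
  classical
  by_cases h : Z ω = z
  · have hY : Yobs J Z Y ω = Y z ω := by
      unfold Yobs
      rw [Finset.sum_eq_single z]
      · simp [indic, h]
      · intro b _ hb
        simp [indic, h, Ne.symm hb]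
      · intro hzmem; exact absurd (h ▸ hZr ω) hzmem
    have hS : Sobs J Z S ω = S z ω := by
      unfold Sobs
      rw [Finset.sum_eq_single z]
      · simp [indic, h]
      · intro b _ hb
        simp [indic, h, Ne.symm hb]
      · intro hzmem; exact absurd (h ▸ hZr ω) hzmem
    rw [hY, hS]
  · simp [indic, h]


/-- Under randomization, monotonicity, principal ignorability, and
positivity, for `z ∈ {1,…,J}` and `g ∈ {J−z+1,…,J}`:
`π_z·E[Y_z·1(G=g)] = E[((p_{J−g+1}(X) − p_{J−g}(X))/p_z(X)) · Y·S·1(Z=z)]`.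
Consequently, if `P(G=g) > 0`, the survivor average causal mean `E[Y_z | G=g]` equals the
displayed ratio. -/
theorem statement5 (P : Measure Ω) [IsProbabilityMeasure P] (J : ℕ)
    (X : Ω → 𝒳) (Z : Ω → ℕ) (S Y : ℕ → Ω → ℝ)
    (hset : Setup P J X Z S Y)
    (hrand : Randomization P J X Z S Y)
    (hmono : Monotonicity P J S)
    (hPI : PrincipalIgnorability P J X S Y)
    (hpos : Positivity P J X S) :
    ∀ z ∈ Finset.Icc 1 J, ∀ g ∈ Finset.Icc (J - z + 1) J,
      (piZ P Z z * ∫ ω, Y z ω * indG J S g ω ∂P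
        = ∫ ω, ((pscore P X S J (J - g + 1) ω - pscore P X S J (J - g) ω) / pscore P X S J z ω)
            * (Yobs J Z Y ω * Sobs J Z S ω * indic Z z ω) ∂P) ∧
      (0 < (P {ω | Gsum J S ω = (g : ℝ)}).toReal →
        (∫ ω, Y z ω * indG J S g ω ∂P) / (P {ω | Gsum J S ω = (g : ℝ)}).toReal
          = (∫ ω, ((pscore P X S J (J - g + 1) ω - pscore P X S J (J - g) ω)
                / pscore P X S J z ω)
              * (Yobs J Z Y ω * Sobs J Z S ω * indic Z z ω) ∂P)
            / (piZ P Z z * (P {ω | Gsum J S ω = (g : ℝ)}).toReal))  := by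
  classical
  obtain ⟨hindep, hpi⟩ := hrand
  obtain ⟨c, hc0, hcb⟩ := hpos
  intro z hz g hg
  obtain ⟨hz1, hzJ⟩ := Finset.mem_Icc.mp hz
  obtain ⟨hgl, hgu⟩ := Finset.mem_Icc.mp hg
  have hg1 : 1 ≤ g := by omega
  have hm : mX X ≤ ‹MeasurableSpace Ω› := measurable_iff_comap_le.mp hset.hX
  -- basic boundedness / measurability / integrability facts
  have hSb : ∀ k, ∀ ω, ‖S k ω‖ ≤ 1 := by
    intro k ω; rcases hset.hS01 k ω with h | h <;> simp [h]
  have hSint : ∀ k, Integrable (S k) P := fun k =>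
    Integrable.mono' (integrable_const 1) (hset.hSm k).aestronglyMeasurable
      (Filter.Eventually.of_forall (hSb k))
  have hGm : Measurable (Gsum J S) := Finset.measurable_sum _ fun i _ => hset.hSm i
  have hGsm : ∀ g' : ℕ, MeasurableSet {ω | Gsum J S ω = (g' : ℝ)} := fun g' =>
    measurableSet_eq_fun hGm measurable_const
  have hindGm : ∀ g', Measurable (indG J S g') := fun g' =>
    measurable_const.indicator (hGsm g')
  have hindGb : ∀ g' ω, ‖indG J S g' ω‖ ≤ 1 := by
    intro g' ω
    simp only [indG, Set.indicator_apply]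
    split_ifs <;> simp
  have hindGint : ∀ g', Integrable (indG J S g') P := fun g' =>
    Integrable.mono' (integrable_const 1) (hindGm g').aestronglyMeasurable
      (Filter.Eventually.of_forall (hindGb g'))
  have hYSint : Integrable (fun ω => Y z ω * S z ω) P := by
    have h := Integrable.bdd_mul (c := 1) (hset.hYint z)
      (hset.hSm z).aestronglyMeasurable (Filter.Eventually.of_forall (hSb z))
    exact h.congr (Filter.Eventually.of_forall fun ω => mul_comm _ _)
  have hYindGint : ∀ g', Integrable (fun ω => Y z ω * indG J S g' ω) P := by
    intro g'
    have h := Integrable.bdd_mul (c := 1) (hset.hYint z)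
      (hindGm g').aestronglyMeasurable (Filter.Eventually.of_forall (hindGb g'))
    exact h.congr (Filter.Eventually.of_forall fun ω => mul_comm _ _)
  -- the auxiliary extension of S with value 0 at index 0
  set q : ℕ → Ω → ℝ := fun k ω => if k = 0 then 0 else S k ω with hqdef
  have hq0 : q 0 = fun _ => (0:ℝ) := by funext ω; simp [hqdef]
  have hqS : ∀ k, k ≠ 0 → q k = S k := by intro k hk; funext ω; simp [hqdef, hk]
  have hqint : ∀ k, Integrable (q k) P := by
    intro k
    by_cases h : k = 0
    · subst h; rw [hq0]; exact integrable_const 0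
    · rw [hqS k h]; exact hSint k
  -- a.e. monotonicity, all pairs simultaneously
  have hMae : ∀ᵐ ω ∂P, ∀ k, ∀ k', k ∈ Finset.Icc 1 J → k' ∈ Finset.Icc 1 J → k' ≤ k →
      S k' ω ≤ S k ω := by
    rw [MeasureTheory.ae_all_iff]
    intro k
    rw [MeasureTheory.ae_all_iff]
    intro k'
    by_cases h : k ∈ Finset.Icc 1 J ∧ k' ∈ Finset.Icc 1 J ∧ k' ≤ k
    · filter_upwards [hmono k h.1 k' h.2.1 h.2.2] with ω hω _ _ _ using hω
    · filter_upwards with ω h1 h2 h3 using absurd ⟨h1, h2, h3⟩ h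
  -- the key a.e. combinatorial identities
  have hAE : ∀ᵐ ω ∂P, (S z ω = ∑ g' ∈ Finset.Icc (J - z + 1) J, indG J S g' ω) ∧
      (indG J S g ω = q (J - g + 1) ω - q (J - g) ω) := by
    filter_upwards [hMae] with ω hω
    obtain ⟨n, hnJ, hsumn, hiff⟩ := keyCount J (fun k => S k ω) (fun k => hset.hS01 k ω)
      (fun k hk k' hk' hle => hω k k' hk hk' hle)
    have hGn : Gsum J S ω = (n : ℝ) := hsumn
    have hindG_eq : ∀ g' : ℕ, indG J S g' ω = if n = g' then (1:ℝ) else 0 := by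
      intro g'
      simp only [indG, Set.indicator_apply, Set.mem_setOf_eq, hGn]
      by_cases h : n = g'
      · rw [if_pos (by exact_mod_cast h), if_pos h]
      · rw [if_neg (fun hc => h (by exact_mod_cast hc)), if_neg h]
    constructor
    · have hs : (∑ g' ∈ Finset.Icc (J - z + 1) J, indG J S g' ω)
          = if n ∈ Finset.Icc (J - z + 1) J then (1:ℝ) else 0 := by
        rw [Finset.sum_congr rfl fun g' _ => hindG_eq g']
        exact Finset.sum_ite_eq _ n (fun _ => (1:ℝ))
      rw [hs]
      by_cases hsz : S z ω = 1
      · have hge := (hiff z hz1 hzJ).mp hsz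
        rw [hsz, if_pos]
        simp only [Finset.mem_Icc]
        omega
      · have h0 : S z ω = 0 := (hset.hS01 z ω).resolve_right hsz
        have hnot : ¬ (J + 1 ≤ n + z) := fun hc => hsz ((hiff z hz1 hzJ).mpr hc)
        have hnmem : n ∉ Finset.Icc (J - z + 1) J := by
          simp only [Finset.mem_Icc]; omega
        rw [h0, if_neg hnmem]
    · rw [hindG_eq g]
      have hq1v : q (J - g + 1) ω = if g ≤ n then (1:ℝ) else 0 := by
        rw [hqS _ (by omega)]
        by_cases h : g ≤ n
        · rw [if_pos h]
          exact (hiff (J - g + 1) (by omega) (by omega)).mpr (by omega)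
        · rw [if_neg h]
          rcases hset.hS01 (J - g + 1) ω with h0 | h0
          · exact h0
          · exact absurd ((hiff (J - g + 1) (by omega) (by omega)).mp h0) (by omega)
      have hq0v : q (J - g) ω = if g + 1 ≤ n then (1:ℝ) else 0 := by
        by_cases hgeqJ : g = J
        · subst hgeqJ
          rw [Nat.sub_self, if_neg (by omega), hq0]
        · rw [hqS _ (by omega)]
          by_cases h : g + 1 ≤ n
          · rw [if_pos h]
            exact (hiff (J - g) (by omega) (by omega)).mpr (by omega)
          · rw [if_neg h]
            rcases hset.hS01 (J - g) ω with h0 | h0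
            · exact h0
            · exact absurd ((hiff (J - g) (by omega) (by omega)).mp h0) (by omega)
      rw [hq1v, hq0v]
      by_cases h1 : n = g
      · subst h1
        rw [if_pos rfl, if_pos le_rfl, if_neg (by omega)]
        norm_num
      · rw [if_neg h1]
        by_cases h2 : g + 1 ≤ n
        · rw [if_pos (by omega), if_pos h2]; ring
        · by_cases h3 : g ≤ n
          · exact absurd (by omega : n = g) h1
          · rw [if_neg h3, if_neg h2]; ring
  have hAE1 : S z =ᵐ[P] fun ω => ∑ g' ∈ Finset.Icc (J - z + 1) J, indG J S g' ω :=
    hAE.mono fun ω h => h.1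
  have hAE2 : indG J S g =ᵐ[P] fun ω => q (J - g + 1) ω - q (J - g) ω :=
    hAE.mono fun ω h => h.2
  -- identifications of pscore with conditional expectations
  have hpsz : pscore P X S J z = P[S z | mX X] := by
    simp only [pscore]
    rw [if_neg (by omega), if_neg (by omega)]
  have hps1 : pscore P X S J (J - g + 1) = P[q (J - g + 1) | mX X] := by
    simp only [pscore]
    rw [if_neg (by omega), if_neg (by omega), hqS _ (by omega)]
  have hps0 : pscore P X S J (J - g) = P[q (J - g) | mX X] := by
    by_cases hgeqJ : g = J
    · subst hgeqJ
      have h00 : g - g = 0 := Nat.sub_self g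
      rw [h00, hq0, show (fun _ : Ω => (0:ℝ)) = (0 : Ω → ℝ) from rfl, condExp_zero]
      rfl
    · simp only [pscore]
      rw [if_neg (by omega), if_neg (by omega), hqS _ (by omega)]
  have hpsSM : ∀ k, StronglyMeasurable[mX X] (pscore P X S J k) := by
    intro k
    simp only [pscore]
    split_ifs
    · exact stronglyMeasurable_const
    · exact stronglyMeasurable_const
    · exact stronglyMeasurable_condExp
  have hpsR : ∀ k, ∀ᵐ ω ∂P, 0 ≤ pscore P X S J k ω ∧ pscore P X S J k ω ≤ 1 := by
    intro k
    simp only [pscore]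
    split_ifs
    · filter_upwards with ω; norm_num
    · filter_upwards with ω; norm_num
    · have h0 : 0 ≤ᵐ[P] P[S k | mX X] := condExp_nonneg
        (Filter.Eventually.of_forall fun ω => by rcases hset.hS01 k ω with h | h <;> simp [h])
      have h1 : P[S k | mX X] ≤ᵐ[P] P[(fun _ => (1:ℝ)) | mX X] := condExp_mono (hSint k)
        (integrable_const 1)
        (Filter.Eventually.of_forall fun ω => by rcases hset.hS01 k ω with h | h <;> simp [h])
      rw [condExp_const hm] at h1
      filter_upwards [h0, h1] with ω ha hb
      exact ⟨ha, hb⟩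
  -- e_g = p_{J-g+1} - p_{J-g} a.e.
  have he_g : eg P X J S g =ᵐ[P]
      fun ω => pscore P X S J (J - g + 1) ω - pscore P X S J (J - g) ω := by
    have h1 : eg P X J S g =ᵐ[P] P[fun ω => q (J - g + 1) ω - q (J - g) ω | mX X] :=
      condExp_congr_ae hAE2
    have h2 : P[fun ω => q (J - g + 1) ω - q (J - g) ω | mX X] =ᵐ[P]
        fun ω => (P[q (J - g + 1) | mX X]) ω - (P[q (J - g) | mX X]) ω := by
      have h := condExp_sub (μ := P) (m := mX X) (hqint (J - g + 1)) (hqint (J - g))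
      filter_upwards [h] with ω hω using hω
    have h3 : (fun ω => (P[q (J - g + 1) | mX X]) ω - (P[q (J - g) | mX X]) ω) =ᵐ[P]
        fun ω => pscore P X S J (J - g + 1) ω - pscore P X S J (J - g) ω := by
      rw [hps1, hps0]
    exact h1.trans (h2.trans h3)
  -- p_z = ∑ e_{g'} a.e.
  have hpz_sum : P[S z | mX X] =ᵐ[P]
      fun ω => ∑ g' ∈ Finset.Icc (J - z + 1) J, eg P X J S g' ω := by
    refine (condExp_congr_ae hAE1).trans ?_
    have hfun : (fun ω => ∑ g' ∈ Finset.Icc (J - z + 1) J, indG J S g' ω)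
        = ∑ g' ∈ Finset.Icc (J - z + 1) J, indG J S g' := by
      funext ω; rw [Finset.sum_apply]
    rw [hfun]
    refine (condExp_finset_sum (fun g' _ => hindGint g') (mX X)).trans ?_
    filter_upwards with ω
    rw [Finset.sum_apply]
    rfl
  -- principal ignorability, a.e. simultaneously in g'
  have hPIae : ∀ᵐ ω ∂P, ∀ g', g' ∈ Finset.Icc (J - z + 1) J →
      (P[fun ω' => Y z ω' * indG J S g ω' | mX X]) ω * eg P X J S g' ω
        = (P[fun ω' => Y z ω' * indG J S g' ω' | mX X]) ω * eg P X J S g ω := by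
    rw [MeasureTheory.ae_all_iff]
    intro g'
    by_cases hmem : g' ∈ Finset.Icc (J - z + 1) J
    · filter_upwards [hPI z hz g hg g' hmem] with ω hω _ using hω
    · filter_upwards with ω h using absurd h hmem
  -- conditional expectation of Y_z S_z decomposes over strata
  have hEYS : P[fun ω => Y z ω * S z ω | mX X] =ᵐ[P]
      fun ω => ∑ g' ∈ Finset.Icc (J - z + 1) J,
        (P[fun ω' => Y z ω' * indG J S g' ω' | mX X]) ω := by
    have hmulsum : (fun ω => Y z ω * S z ω) =ᵐ[P]
        fun ω => ∑ g' ∈ Finset.Icc (J - z + 1) J, Y z ω * indG J S g' ω := by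
      filter_upwards [hAE1] with ω hω
      rw [← Finset.mul_sum, ← hω]
    refine (condExp_congr_ae hmulsum).trans ?_
    have hfun : (fun ω => ∑ g' ∈ Finset.Icc (J - z + 1) J, Y z ω * indG J S g' ω)
        = ∑ g' ∈ Finset.Icc (J - z + 1) J, (fun ω => Y z ω * indG J S g' ω) := by
      funext ω; rw [Finset.sum_apply]
    rw [hfun]
    refine (condExp_finset_sum (fun g' _ => hYindGint g') (mX X)).trans ?_
    filter_upwards with ω
    rw [Finset.sum_apply]
  have hczae : ∀ᵐ ω ∂P, c ≤ pscore P X S J z ω := hcb z hz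
  -- the weight function
  set w : Ω → ℝ := fun ω =>
    (pscore P X S J (J - g + 1) ω - pscore P X S J (J - g) ω) / pscore P X S J z ω with hwdef
  have hwM : Measurable[mX X] w :=
    (((hpsSM _).measurable.sub (hpsSM _).measurable).div (hpsSM _).measurable)
  have hwSM : StronglyMeasurable[mX X] w := hwM.stronglyMeasurable
  have hwBdd : ∀ᵐ ω ∂P, ‖w ω‖ ≤ 1 / c := by
    filter_upwards [hpsR (J - g + 1), hpsR (J - g), hczae] with ω h1 h2 h5
    have hn : |pscore P X S J (J - g + 1) ω - pscore P X S J (J - g) ω| ≤ 1 := by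
      rw [abs_le]
      constructor
      · linarith [h1.1, h1.2, h2.1, h2.2]
      · linarith [h1.1, h1.2, h2.1, h2.2]
    have hd : c ≤ |pscore P X S J z ω| := le_trans h5 (le_abs_self _)
    rw [hwdef]
    simp only [Real.norm_eq_abs]
    rw [abs_div]
    exact div_le_div₀ zero_le_one hn hc0 hd
  -- the key a.e. identity : w ⬝ E[Y_z S_z | X] = E[Y_z 1(G=g) | X]
  have hKey : (fun ω => w ω * (P[fun ω' => Y z ω' * S z ω' | mX X]) ω) =ᵐ[P]
      P[fun ω' => Y z ω' * indG J S g ω' | mX X] := by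
    filter_upwards [he_g, hpz_sum, hEYS, hPIae, hczae] with ω h1 h2 h3 h4 h5
    have hpz' : pscore P X S J z ω = ∑ g' ∈ Finset.Icc (J - z + 1) J, eg P X J S g' ω := by
      rw [hpsz]; exact h2
    have hpzne : pscore P X S J z ω ≠ 0 := ne_of_gt (lt_of_lt_of_le hc0 h5)
    have hstep : eg P X J S g ω * (∑ g' ∈ Finset.Icc (J - z + 1) J,
          (P[fun ω' => Y z ω' * indG J S g' ω' | mX X]) ω)
        = (P[fun ω' => Y z ω' * indG J S g ω' | mX X]) ω * pscore P X S J z ω := by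
      rw [Finset.mul_sum, hpz', Finset.mul_sum]
      refine Finset.sum_congr rfl fun g' hg' => ?_
      rw [mul_comm (eg P X J S g ω), ← h4 g' hg']
    show w ω * (P[fun ω' => Y z ω' * S z ω' | mX X]) ω
        = (P[fun ω' => Y z ω' * indG J S g ω' | mX X]) ω
    rw [h3, hwdef]
    show (pscore P X S J (J - g + 1) ω - pscore P X S J (J - g) ω) / pscore P X S J z ω
        * (∑ g' ∈ Finset.Icc (J - z + 1) J, (P[fun ω' => Y z ω' * indG J S g' ω' | mX X]) ω)
        = (P[fun ω' => Y z ω' * indG J S g ω' | mX X]) ω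
    rw [← h1, div_mul_eq_mul_div, hstep, mul_div_assoc, div_self hpzne, mul_one]
  -- integrability of the weighted product
  have hwYSint : Integrable (fun ω => w ω * (Y z ω * S z ω)) P :=
    Integrable.bdd_mul hYSint (hwM.mono hm le_rfl).aestronglyMeasurable hwBdd
  -- independence step
  set W : Ω → 𝒳 × (ℕ → ℝ) × (ℕ → ℝ) :=
    fun ω => (X ω, fun k => S k ω, fun k => Y k ω) with hWdef
  have hWm : Measurable W := hset.hX.prodMk
    ((measurable_pi_lambda _ fun k => hset.hSm k).prodMk
      (measurable_pi_lambda _ fun k => hset.hYm k))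
  have hWself : Measurable[MeasurableSpace.comap W inferInstance] W :=
    measurable_iff_comap_le.mpr le_rfl
  have hXW : Measurable[MeasurableSpace.comap W inferInstance] X := hWself.fst
  have hmW : mX X ≤ MeasurableSpace.comap W inferInstance := measurable_iff_comap_le.mp hXW
  have hSW : Measurable[MeasurableSpace.comap W inferInstance] (S z) :=
    (measurable_pi_apply z).comp hWself.snd.fst
  have hYW : Measurable[MeasurableSpace.comap W inferInstance] (Y z) :=
    (measurable_pi_apply z).comp hWself.snd.snd
  have hfW : Measurable[MeasurableSpace.comap W inferInstance]
      (fun ω => w ω * (Y z ω * S z ω)) := (hwM.mono hmW le_rfl).mul (hYW.mul hSW)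
  have hindicEq : indic Z z = Set.indicator {ω | Z ω = z} (fun _ => (1:ℝ)) := by
    funext ω; simp [indic, Set.indicator_apply]
  have hZset : MeasurableSet {ω | Z ω = z} := hset.hZ (measurableSet_singleton z)
  have hindicM : Measurable (indic Z z) := by
    rw [hindicEq]; exact measurable_const.indicator hZset
  have hindicCZ : Measurable[MeasurableSpace.comap Z inferInstance] (indic Z z) := by
    have hs : MeasurableSet[MeasurableSpace.comap Z inferInstance] {ω | Z ω = z} :=
      ⟨{z}, measurableSet_singleton z, rfl⟩
    rw [hindicEq]
    exact measurable_const.indicator hs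
  have hIndepF : IndepFun (indic Z z) (fun ω => w ω * (Y z ω * S z ω)) P := by
    rw [IndepFun_iff_Indep]
    have h1 : Indep (MeasurableSpace.comap Z inferInstance)
        (MeasurableSpace.comap W inferInstance) P := (IndepFun_iff_Indep _ _ _).mp hindep
    exact indep_of_indep_of_le_left
      (indep_of_indep_of_le_right h1 (measurable_iff_comap_le.mp hfW))
      (measurable_iff_comap_le.mp hindicCZ)
  have hindicInt : ∫ ω, indic Z z ω ∂P = piZ P Z z := by
    rw [hindicEq, integral_indicator_const _ hZset]
    simp [piZ]
    rfl
  have hprod : ∫ ω, indic Z z ω * (w ω * (Y z ω * S z ω)) ∂P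
      = piZ P Z z * ∫ ω, w ω * (Y z ω * S z ω) ∂P := by
    have h := hIndepF.integral_mul_eq_mul_integral hindicM.aestronglyMeasurable
      ((hfW.mono (measurable_iff_comap_le.mp hWm) le_rfl).aestronglyMeasurable)
    rw [← hindicInt]
    exact h
  -- pull-out property and tower rule
  have hpull : P[fun ω => w ω * (Y z ω * S z ω) | mX X] =ᵐ[P]
      fun ω => w ω * (P[fun ω' => Y z ω' * S z ω' | mX X]) ω := by
    have h := condExp_mul_of_stronglyMeasurable_left hwSM hwYSint hYSint
    filter_upwards [h] with ω hω using hω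
  have hIf : ∫ ω, w ω * (Y z ω * S z ω) ∂P = ∫ ω, Y z ω * indG J S g ω ∂P := by
    calc ∫ ω, w ω * (Y z ω * S z ω) ∂P
        = ∫ ω, (P[fun ω' => w ω' * (Y z ω' * S z ω') | mX X]) ω ∂P :=
          (integral_condExp hm).symm
      _ = ∫ ω, w ω * (P[fun ω' => Y z ω' * S z ω' | mX X]) ω ∂P := integral_congr_ae hpull
      _ = ∫ ω, (P[fun ω' => Y z ω' * indG J S g ω' | mX X]) ω ∂P := integral_congr_ae hKey
      _ = ∫ ω, Y z ω * indG J S g ω ∂P := integral_condExp hm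
  -- main identity
  have hmain : piZ P Z z * ∫ ω, Y z ω * indG J S g ω ∂P
      = ∫ ω, ((pscore P X S J (J - g + 1) ω - pscore P X S J (J - g) ω) / pscore P X S J z ω)
          * (Yobs J Z Y ω * Sobs J Z S ω * indic Z z ω) ∂P := by
    have hptwise : ∀ ω,
        ((pscore P X S J (J - g + 1) ω - pscore P X S J (J - g) ω) / pscore P X S J z ω)
            * (Yobs J Z Y ω * Sobs J Z S ω * indic Z z ω)
          = indic Z z ω * (w ω * (Y z ω * S z ω)) := by
      intro ω
      rw [obs_collapse J Z S Y hset.hZr z ω, hwdef]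
      ring
    calc piZ P Z z * ∫ ω, Y z ω * indG J S g ω ∂P
        = piZ P Z z * ∫ ω, w ω * (Y z ω * S z ω) ∂P := by rw [hIf]
      _ = ∫ ω, indic Z z ω * (w ω * (Y z ω * S z ω)) ∂P := hprod.symm
      _ = ∫ ω, ((pscore P X S J (J - g + 1) ω - pscore P X S J (J - g) ω)
            / pscore P X S J z ω) * (Yobs J Z Y ω * Sobs J Z S ω * indic Z z ω) ∂P :=
          integral_congr_ae (Filter.Eventually.of_forall fun ω => (hptwise ω).symm)
  refine ⟨hmain, fun hPG => ?_⟩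
  have hπ : 0 < piZ P Z z := hpi z hz
  rw [← hmain, mul_div_mul_left _ _ (ne_of_gt hπ)]


end TruncationByDeath
end
end

section
/- Under randomization, monotonicity, principal ignorability, and the positivity condition, for every z ∈ {1,...,J} and every g ∈ {J−z+1,...,J}: E[Y_z·1(G=g)] = E[(S·1(Z=J−g+1)/π_{J−g+1} − S·1(Z=J−g)/π_{J−g})·m_z(X)], where for g = J the term S·1(Z=0)/π_0 is taken to be 0. -/
open MeasureTheory ProbabilityTheory

noncomputable section

namespace TruncationByDeath

variable {Ω : Type*} {𝒳 : Type*} [MeasurableSpace Ω] [MeasurableSpace 𝒳]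

private lemma sum_eq_card {J : ℕ} {f : ℕ → ℝ} (h01 : ∀ k, f k = 0 ∨ f k = 1) :
    ∑ k ∈ Finset.Icc 1 J, f k
      = (((Finset.Icc 1 J).filter (fun k => f k = 1)).card : ℝ) := by
  rw [Finset.card_filter, Nat.cast_sum]
  refine Finset.sum_congr rfl fun k _ => ?_
  rcases h01 k with h | h <;> simp [h]

private lemma one_iff_card {J : ℕ} {f : ℕ → ℝ} (h01 : ∀ k, f k = 0 ∨ f k = 1)
    (hmono : ∀ i ∈ Finset.Icc 1 J, ∀ j ∈ Finset.Icc 1 J, i ≤ j → f i ≤ f j)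
    {w : ℕ} (hw : w ∈ Finset.Icc 1 J) :
    f w = 1 ↔ J - w + 1 ≤ ((Finset.Icc 1 J).filter (fun k => f k = 1)).card := by
  simp only [Finset.mem_Icc] at hw
  constructor
  · intro h1
    have hsub : Finset.Icc w J ⊆ (Finset.Icc 1 J).filter (fun k => f k = 1) := by
      intro k hk
      simp only [Finset.mem_Icc] at hk
      simp only [Finset.mem_filter, Finset.mem_Icc]
      refine ⟨⟨le_trans hw.1 hk.1, hk.2⟩, ?_⟩
      have hle := hmono w (by simp only [Finset.mem_Icc]; omega) k
        (by simp only [Finset.mem_Icc]; omega) hk.1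
      rcases h01 k with h | h
      · rw [h1, h] at hle; linarith
      · exact h
    have := Finset.card_le_card hsub
    rw [Nat.card_Icc] at this
    omega
  · intro hcard
    by_contra hne
    have h0 : f w = 0 := (h01 w).resolve_right hne
    have hsub : (Finset.Icc 1 J).filter (fun k => f k = 1) ⊆ Finset.Icc (w + 1) J := by
      intro k hk
      simp only [Finset.mem_filter, Finset.mem_Icc] at hk
      simp only [Finset.mem_Icc]
      refine ⟨?_, hk.1.2⟩
      by_contra hlt
      push_neg at hlt
      have hle := hmono k (by simp only [Finset.mem_Icc]; omega) w
        (by simp only [Finset.mem_Icc]; omega) (by omega)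
      rw [hk.2, h0] at hle; linarith
    have := Finset.card_le_card hsub
    rw [Nat.card_Icc] at this
    omega

private lemma card_le_J {J : ℕ} {f : ℕ → ℝ} :
    ((Finset.Icc 1 J).filter (fun k => f k = 1)).card ≤ J := by
  have := Finset.card_le_card (Finset.filter_subset (fun k => f k = 1) (Finset.Icc 1 J))
  rwa [Nat.card_Icc, Nat.add_sub_cancel] at this

private lemma indepFun_of_comap {β γ β' γ' : Type*} [MeasurableSpace β] [MeasurableSpace γ]
    [MeasurableSpace β'] [MeasurableSpace γ'] {P : Measure Ω}
    {f : Ω → β} {g : Ω → γ} {A : Ω → β'} {B : Ω → γ'}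
    (hfg : IndepFun f g P)
    (hA : Measurable[MeasurableSpace.comap f inferInstance] A)
    (hB : Measurable[MeasurableSpace.comap g inferInstance] B) :
    IndepFun A B P := by
  rw [ProbabilityTheory.IndepFun_iff]
  intro t1 t2 h1 h2
  exact hfg.meas_inter (hA.comap_le _ h1) (hB.comap_le _ h2)

/-- Under randomization, monotonicity, principal ignorability and
positivity, for every `z ∈ {1,…,J}` and `g ∈ {J−z+1,…,J}`:
`E[Y_z·1(G=g)] = E[(S·1(Z=J−g+1)/π_{J−g+1} − S·1(Z=J−g)/π_{J−g}) · m_z(X)]`,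
with the convention that the term `S·1(Z=0)/π_0` is `0` (case `g = J`). -/
theorem statement6 (P : Measure Ω) [IsProbabilityMeasure P] (J : ℕ)
    (X : Ω → 𝒳) (Z : Ω → ℕ) (S Y : ℕ → Ω → ℝ)
    (hset : Setup P J X Z S Y)
    (hrand : Randomization P J X Z S Y)
    (hmono : Monotonicity P J S)
    (hPI : PrincipalIgnorability P J X S Y)
    (hpos : Positivity P J X S) :
    ∀ z ∈ Finset.Icc 1 J, ∀ g ∈ Finset.Icc (J - z + 1) J,
      ∀ mz : Ω → ℝ, Measurable[mX X] mz →
      ((fun ω => mz ω * piZ P Z z * pscore P X S J z ω)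
        =ᵐ[P] P[fun ω => Yobs J Z Y ω * Sobs J Z S ω * indic Z z ω | mX X]) →
      ∫ ω, Y z ω * indG J S g ω ∂P
        = ∫ ω, (wterm P J Z S (J - g + 1) ω - wterm P J Z S (J - g) ω) * mz ω ∂P := by
  intro z hz g hg mz hmz hmzP
  have hzmem := hz
  have hgmem := hg
  simp only [Finset.mem_Icc] at hz hg
  obtain ⟨hz1, hzJ⟩ := hz
  obtain ⟨hg1', hgJ⟩ := hg
  have hJ2 := hset.hJ
  have hg1 : 1 ≤ g := by omega
  have hm : mX X ≤ (inferInstance : MeasurableSpace Ω) := hset.hX.comap_le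
  haveI : SigmaFinite (P.trim hm) := by infer_instance
  -- the joint variable
  set W : Ω → 𝒳 × (ℕ → ℝ) × (ℕ → ℝ) :=
    fun ω => (X ω, fun j => S j ω, fun j => Y j ω) with hWdef
  have hIW : IndepFun Z W P := hrand.1
  have hWcm : Measurable[MeasurableSpace.comap W inferInstance] W :=
    Measurable.of_comap_le le_rfl
  have hmXW : mX X ≤ MeasurableSpace.comap W inferInstance := by
    rintro s ⟨t, ht, rfl⟩
    exact ⟨Prod.fst ⁻¹' t, measurable_fst ht, rfl⟩
  have hSWm : ∀ w, Measurable[MeasurableSpace.comap W inferInstance] (S w) := fun w =>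
    ((measurable_pi_apply w).comp (measurable_fst.comp measurable_snd)).comp hWcm
  have hYWm : ∀ w, Measurable[MeasurableSpace.comap W inferInstance] (Y w) := fun w =>
    ((measurable_pi_apply w).comp (measurable_snd.comp measurable_snd)).comp hWcm
  have hmzWm : Measurable[MeasurableSpace.comap W inferInstance] mz := hmz.mono hmXW le_rfl
  have hZcm : Measurable[MeasurableSpace.comap Z inferInstance] Z :=
    Measurable.of_comap_le le_rfl
  have hindicW : ∀ w, Measurable[MeasurableSpace.comap Z inferInstance] (indic Z w) := fun w =>
    (Measurable.of_discrete (f := fun n => if n = w then (1 : ℝ) else 0)).comp hZcm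
  have hindicA : ∀ w, Measurable (indic Z w) := fun w =>
    (Measurable.of_discrete (f := fun n => if n = w then (1 : ℝ) else 0)).comp hset.hZ
  have hmzA : Measurable mz := hmz.mono hm le_rfl
  -- integral of indic
  have hint_indic : ∀ w, ∫ ω, indic Z w ω ∂P = piZ P Z w := by
    intro w
    have hms : MeasurableSet {ω | Z ω = w} := hset.hZ (measurableSet_singleton w)
    have hset_eq : (fun ω => indic Z w ω)
        = Set.indicator {ω | Z ω = w} (fun _ => (1 : ℝ)) := by
      funext ω
      simp [indic, Set.indicator_apply, Set.mem_setOf_eq]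
    rw [hset_eq, MeasureTheory.integral_indicator_const (1 : ℝ) hms, smul_eq_mul, mul_one, piZ]
    rfl
  -- treatment probabilities and positivity
  have hμz : 0 < piZ P Z z := hrand.2 z (by simp only [Finset.mem_Icc]; omega)
  obtain ⟨c, hc, hcz⟩ := hpos
  have hpseq : pscore P X S J z = P[S z | mX X] := by
    simp only [pscore, if_neg (by omega : ¬ z = 0), if_neg (by omega : ¬ z = J + 1)]
  have hpz_ae : ∀ᵐ ω ∂P, c ≤ (P[S z | mX X]) ω := by
    have := hcz z (by simp only [Finset.mem_Icc]; omega)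
    rwa [hpseq] at this
  -- a.e. monotone set
  have hgood : ∀ᵐ ω ∂P, ∀ i, ∀ j, i ∈ Finset.Icc 1 J → j ∈ Finset.Icc 1 J → i ≤ j
      → S i ω ≤ S j ω := by
    rw [MeasureTheory.ae_all_iff]
    intro i
    rw [MeasureTheory.ae_all_iff]
    intro j
    by_cases hi : i ∈ Finset.Icc 1 J
    · by_cases hj : j ∈ Finset.Icc 1 J
      · by_cases hij : i ≤ j
        · filter_upwards [hmono j hj i hi hij] with ω h _ _ _
          exact h
        · exact Filter.Eventually.of_forall fun ω _ _ h3 => absurd h3 hij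
      · exact Filter.Eventually.of_forall fun ω _ h2 _ => absurd h2 hj
    · exact Filter.Eventually.of_forall fun ω h1 _ _ => absurd h1 hi
  -- counting function
  set cardf : Ω → ℕ := fun ω => ((Finset.Icc 1 J).filter (fun k => S k ω = 1)).card
    with hcardf
  have hGsum : ∀ ω, Gsum J S ω = (cardf ω : ℝ) := fun ω =>
    sum_eq_card (fun k => hset.hS01 k ω)
  have hind_eq : ∀ g' ω, indG J S g' ω = if cardf ω = g' then (1 : ℝ) else 0 := by
    intro g' ω
    simp only [indG, Set.indicator_apply, Set.mem_setOf_eq, hGsum ω, Nat.cast_inj]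
  -- a.e. identity: indG g = S_{J-g+1} - S'_{J-g}
  have hindG : indG J S g =ᵐ[P]
      fun ω => S (J - g + 1) ω - (if J - g = 0 then 0 else S (J - g) ω) := by
    filter_upwards [hgood] with ω hω
    have h01 : ∀ k, S k ω = 0 ∨ S k ω = 1 := fun k => hset.hS01 k ω
    have hmw : ∀ i ∈ Finset.Icc 1 J, ∀ j ∈ Finset.Icc 1 J, i ≤ j → S i ω ≤ S j ω :=
      fun i hi j hj hij => hω i j hi hj hij
    have hcard : cardf ω ≤ J := card_le_J
    have h1 : S (J - g + 1) ω = 1 ↔ g ≤ cardf ω := by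
      have h : S (J - g + 1) ω = 1 ↔ J - (J - g + 1) + 1 ≤ cardf ω :=
        one_iff_card h01 hmw (w := J - g + 1) (by simp only [Finset.mem_Icc]; omega)
      rw [h]
      omega
    have h2 : J - g ≠ 0 → (S (J - g) ω = 1 ↔ g + 1 ≤ cardf ω) := by
      intro hne
      have h : S (J - g) ω = 1 ↔ J - (J - g) + 1 ≤ cardf ω :=
        one_iff_card h01 hmw (w := J - g) (by simp only [Finset.mem_Icc]; omega)
      rw [h]
      omega
    rw [hind_eq g ω]
    by_cases hne : J - g = 0
    · rw [if_pos hne, sub_zero]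
      by_cases hcg : cardf ω = g
      · rw [if_pos hcg, h1.mpr (le_of_eq hcg.symm)]
      · rw [if_neg hcg]
        rcases h01 (J - g + 1) with ha | ha
        · rw [ha]
        · exfalso
          have := h1.mp ha
          omega
    · rw [if_neg hne]
      by_cases hcg : cardf ω = g
      · rw [if_pos hcg, h1.mpr (le_of_eq hcg.symm)]
        have hb : S (J - g) ω = 0 := by
          rcases h01 (J - g) with hb | hb
          · exact hb
          · exfalso
            have := (h2 hne).mp hb
            omega
        rw [hb]
        norm_num
      · rw [if_neg hcg]
        rcases h01 (J - g + 1) with ha | ha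
        · rcases h01 (J - g) with hb | hb
          · rw [ha, hb]
            norm_num
          · exfalso
            have hA : ¬ g ≤ cardf ω := fun h => by
              rw [h1.mpr h] at ha
              norm_num at ha
            have hB := (h2 hne).mp hb
            omega
        · rcases h01 (J - g) with hb | hb
          · exfalso
            have hA := h1.mp ha
            have hB : ¬ g + 1 ≤ cardf ω := fun h => by
              rw [(h2 hne).mpr h] at hb
              norm_num at hb
            omega
          · rw [ha, hb]
            norm_num
  -- a.e. identity: S z = ∑_{g'} indG g'
  have hSsum : S z =ᵐ[P] fun ω => ∑ g' ∈ Finset.Icc (J - z + 1) J, indG J S g' ω := by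
    filter_upwards [hgood] with ω hω
    have h01 : ∀ k, S k ω = 0 ∨ S k ω = 1 := fun k => hset.hS01 k ω
    have hmw : ∀ i ∈ Finset.Icc 1 J, ∀ j ∈ Finset.Icc 1 J, i ≤ j → S i ω ≤ S j ω :=
      fun i hi j hj hij => hω i j hi hj hij
    have hcard : cardf ω ≤ J := card_le_J
    have hsum : ∑ g' ∈ Finset.Icc (J - z + 1) J, indG J S g' ω
        = ∑ g' ∈ Finset.Icc (J - z + 1) J, (if cardf ω = g' then (1 : ℝ) else 0) :=
      Finset.sum_congr rfl fun g' _ => hind_eq g' ω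
    rw [hsum, Finset.sum_ite_eq]
    have hiff : S z ω = 1 ↔ J - z + 1 ≤ cardf ω :=
      one_iff_card h01 hmw (w := z) (by simp only [Finset.mem_Icc]; omega)
    by_cases hmem : cardf ω ∈ Finset.Icc (J - z + 1) J
    · rw [if_pos hmem]
      simp only [Finset.mem_Icc] at hmem
      exact hiff.mpr (by omega)
    · rw [if_neg hmem]
      rcases h01 z with h | h
      · exact h
      · exfalso
        have := hiff.mp h
        exact hmem (by simp only [Finset.mem_Icc]; omega)
  -- collapse of observed quantities
  have hSobs : ∀ ω, Sobs J Z S ω = S (Z ω) ω := by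
    intro ω
    have := Finset.sum_eq_single_of_mem (s := Finset.Icc 1 J) (Z ω) (hset.hZr ω)
      (f := fun b => indic Z b ω * S b ω)
      (fun b _ hb => by
        have hne : ¬ Z ω = b := fun h => hb h.symm
        simp only [indic, if_neg hne, zero_mul])
    rw [Sobs, this]
    simp [indic]
  have hYobs : ∀ ω, Yobs J Z Y ω = Y (Z ω) ω := by
    intro ω
    have := Finset.sum_eq_single_of_mem (s := Finset.Icc 1 J) (Z ω) (hset.hZr ω)
      (f := fun b => indic Z b ω * Y b ω)
      (fun b _ hb => by
        have hne : ¬ Z ω = b := fun h => hb h.symm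
        simp only [indic, if_neg hne, zero_mul])
    rw [Yobs, this]
    simp [indic]
  have hYSind : ∀ ω, Yobs J Z Y ω * Sobs J Z S ω * indic Z z ω
      = Y z ω * S z ω * indic Z z ω := by
    intro ω
    by_cases h : Z ω = z
    · rw [hSobs, hYobs, h]
    · simp [indic, if_neg h]
  have hSobs_ind : ∀ ω w, Sobs J Z S ω * indic Z w ω = S w ω * indic Z w ω := by
    intro ω w
    by_cases h : Z ω = w
    · rw [hSobs, h]
    · simp [indic, if_neg h]
  -- integrability
  have hintYS : Integrable (fun ω => Y z ω * S z ω) P := by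
    refine Integrable.mono' (hset.hYint z).abs
      (((hset.hYm z).mul (hset.hSm z)).aestronglyMeasurable) (ae_of_all _ fun ω => ?_)
    rcases hset.hS01 z ω with h | h <;> simp [h, abs_nonneg]
  have hintYSind : Integrable (fun ω => Y z ω * S z ω * indic Z z ω) P := by
    refine Integrable.mono' (hset.hYint z).abs
      ((((hset.hYm z).mul (hset.hSm z)).mul (hindicA z)).aestronglyMeasurable)
      (ae_of_all _ fun ω => ?_)
    rcases hset.hS01 z ω with h | h <;> by_cases hi : Z ω = z <;>
      simp [h, indic, hi, abs_nonneg]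
  have hintmzpz : Integrable (fun ω => mz ω * piZ P Z z * pscore P X S J z ω) P :=
    (integrable_condExp).congr hmzP.symm
  have hintmz : Integrable mz P := by
    refine Integrable.mono'
      ((hintmzpz.abs.const_mul ((c * piZ P Z z)⁻¹))) hmzA.aestronglyMeasurable ?_
    have hpz_ae' : ∀ᵐ ω ∂P, c ≤ pscore P X S J z ω := by
      rw [hpseq]; exact hpz_ae
    filter_upwards [hpz_ae'] with ω hω
    have hpz0 : 0 < pscore P X S J z ω := lt_of_lt_of_le hc hω
    have key : |mz ω| * (c * piZ P Z z) ≤ |mz ω * piZ P Z z * pscore P X S J z ω| := by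
      rw [abs_mul, abs_mul, abs_of_pos hμz, abs_of_pos hpz0]
      calc |mz ω| * (c * piZ P Z z) = |mz ω| * piZ P Z z * c := by ring
        _ ≤ |mz ω| * piZ P Z z * pscore P X S J z ω :=
            mul_le_mul_of_nonneg_left hω (mul_nonneg (abs_nonneg _) hμz.le)
    have hcπ : 0 < c * piZ P Z z := mul_pos hc hμz
    calc ‖mz ω‖ = |mz ω| := rfl
      _ = (c * piZ P Z z)⁻¹ * (|mz ω| * (c * piZ P Z z)) := by
          field_simp
      _ ≤ (c * piZ P Z z)⁻¹ * |mz ω * piZ P Z z * pscore P X S J z ω| :=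
          mul_le_mul_of_nonneg_left key (inv_nonneg.mpr hcπ.le)
  have hintSmz : ∀ w, Integrable (fun ω => S w ω * mz ω) P := by
    intro w
    refine Integrable.mono' hintmz.abs
      (((hset.hSm w).mul hmzA).aestronglyMeasurable) (ae_of_all _ fun ω => ?_)
    rcases hset.hS01 w ω with h | h <;> simp [h, abs_nonneg]
  -- measurability and integrability of indG
  have hGm : Measurable (Gsum J S) := by
    unfold Gsum
    exact Finset.measurable_sum _ fun i _ => hset.hSm i
  have hindGm : ∀ g', Measurable (indG J S g') := fun g' =>
    measurable_const.indicator (hGm (measurableSet_singleton _))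
  have hintindG : ∀ g', Integrable (indG J S g') P := by
    intro g'
    refine Integrable.mono' (integrable_const (1 : ℝ))
      (hindGm g').aestronglyMeasurable (ae_of_all _ fun ω => ?_)
    rw [hind_eq g' ω]
    by_cases h : cardf ω = g' <;> simp [h]
  have hintYindG : ∀ g', Integrable (fun ω => Y z ω * indG J S g' ω) P := by
    intro g'
    refine Integrable.mono' (hset.hYint z).abs
      (((hset.hYm z).mul (hindGm g')).aestronglyMeasurable) (ae_of_all _ fun ω => ?_)
    rw [hind_eq g' ω]
    by_cases h : cardf ω = g' <;> simp [h, abs_nonneg]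
  have hintmzindG : Integrable (fun ω => mz ω * indG J S g ω) P := by
    refine Integrable.mono' hintmz.abs
      ((hmzA.mul (hindGm g)).aestronglyMeasurable) (ae_of_all _ fun ω => ?_)
    rw [hind_eq g ω]
    by_cases h : cardf ω = g <;> simp [h, abs_nonneg]
  -- wterm integrals via independence
  have hstep_w : ∀ w, w ∈ Finset.Icc 1 J →
      ∫ ω, wterm P J Z S w ω * mz ω ∂P = ∫ ω, S w ω * mz ω ∂P := by
    intro w hw
    simp only [Finset.mem_Icc] at hw
    have hw0 : w ≠ 0 := by omega
    have hπw : 0 < piZ P Z w := hrand.2 w (by simp only [Finset.mem_Icc]; omega)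
    have e1 : ∀ ω, wterm P J Z S w ω * mz ω
        = (piZ P Z w)⁻¹ * (indic Z w ω * (S w ω * mz ω)) := by
      intro ω
      simp only [wterm, if_neg hw0]
      rw [div_eq_mul_inv, mul_comm (Sobs J Z S ω) (indic Z w ω), ← mul_assoc]
      rw [mul_comm (indic Z w ω) (Sobs J Z S ω), hSobs_ind ω w]
      ring
    simp_rw [e1]
    rw [MeasureTheory.integral_const_mul]
    have hind : IndepFun (indic Z w) (fun ω => S w ω * mz ω) P :=
      indepFun_of_comap hIW (hindicW w) ((hSWm w).mul hmzWm)
    rw [hind.integral_fun_mul_eq_mul_integral ((hindicA w).aestronglyMeasurable)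
      (((hset.hSm w).mul hmzA).aestronglyMeasurable)]
    rw [hint_indic w, ← mul_assoc, inv_mul_cancel₀ hπw.ne', one_mul]
  have hwterm0 : ∫ ω, wterm P J Z S 0 ω * mz ω ∂P = 0 := by
    simp [wterm]
  have hSobs01 : ∀ ω, Sobs J Z S ω = 0 ∨ Sobs J Z S ω = 1 := by
    intro ω
    rw [hSobs]
    exact hset.hS01 (Z ω) ω
  have hSobsm : Measurable (Sobs J Z S) := by
    unfold Sobs
    exact Finset.measurable_sum _ fun i _ => (hindicA i).mul (hset.hSm i)
  have hint_wterm : ∀ w, Integrable (fun ω => wterm P J Z S w ω * mz ω) P := by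
    intro w
    by_cases hw0 : w = 0
    · subst hw0
      have hz0 : (fun ω => wterm P J Z S 0 ω * mz ω) = fun _ => (0 : ℝ) := by
        funext ω
        simp [wterm]
      rw [hz0]
      exact integrable_zero _ _ _
    · have hwt : (fun ω => wterm P J Z S w ω * mz ω)
          = fun ω => Sobs J Z S ω * indic Z w ω / piZ P Z w * mz ω := by
        funext ω
        simp only [wterm, if_neg hw0]
      rw [hwt]
      refine Integrable.mono' (hintmz.abs.const_mul ((piZ P Z w)⁻¹))
        ((((hSobsm.mul (hindicA w)).div_const _).mul hmzA).aestronglyMeasurable)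
        (ae_of_all _ fun ω => ?_)
      have h1 : |Sobs J Z S ω * indic Z w ω| ≤ 1 := by
        rcases hSobs01 ω with h | h <;> by_cases hi : Z ω = w <;>
          simp [h, indic, hi]
      have hπnn : 0 ≤ piZ P Z w := ENNReal.toReal_nonneg
      calc ‖Sobs J Z S ω * indic Z w ω / piZ P Z w * mz ω‖
          = |Sobs J Z S ω * indic Z w ω| * |mz ω| * (piZ P Z w)⁻¹ := by
            rw [Real.norm_eq_abs, abs_mul, abs_div, abs_of_nonneg hπnn, abs_mul]
            ring
        _ ≤ 1 * |mz ω| * (piZ P Z w)⁻¹ := by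
            gcongr
        _ = (piZ P Z w)⁻¹ * |mz ω| := by ring
  -- conditional expectation factorization via independence
  have hcondYSind : (fun ω => piZ P Z z * (P[fun ω' => Y z ω' * S z ω' | mX X]) ω)
      =ᵐ[P] P[fun ω => Y z ω * S z ω * indic Z z ω | mX X] := by
    refine ae_eq_condExp_of_forall_setIntegral_eq hm hintYSind
      (fun s _ _ => (integrable_condExp.const_mul _).integrableOn)
      (fun s hs _ => ?_)
      ((stronglyMeasurable_const.mul stronglyMeasurable_condExp).aestronglyMeasurable)
    have hsA : MeasurableSet s := hm s hs
    have hindep : IndepFun (indic Z z)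
        (Set.indicator s (fun ω' => Y z ω' * S z ω')) P := by
      refine indepFun_of_comap hIW (hindicW z) ?_
      exact Measurable.indicator ((hYWm z).mul (hSWm z)) (hmXW s hs)
    calc ∫ x in s, piZ P Z z * (P[fun ω' => Y z ω' * S z ω' | mX X]) x ∂P
        = piZ P Z z * ∫ x in s, (P[fun ω' => Y z ω' * S z ω' | mX X]) x ∂P :=
          MeasureTheory.integral_const_mul _ _
      _ = piZ P Z z * ∫ x in s, Y z x * S z x ∂P := by
          rw [setIntegral_condExp hm hintYS hs]
      _ = (∫ ω, indic Z z ω ∂P)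
            * ∫ ω, Set.indicator s (fun ω' => Y z ω' * S z ω') ω ∂P := by
          rw [hint_indic z, integral_indicator hsA]
      _ = ∫ ω, indic Z z ω * Set.indicator s (fun ω' => Y z ω' * S z ω') ω ∂P :=
          (hindep.integral_fun_mul_eq_mul_integral ((hindicA z).aestronglyMeasurable)
            ((((hset.hYm z).mul (hset.hSm z)).indicator hsA).aestronglyMeasurable)).symm
      _ = ∫ x in s, Y z x * S z x * indic Z z x ∂P := by
          rw [← integral_indicator hsA]
          congr 1
          funext ω
          by_cases hωs : ω ∈ s
          · simp only [Set.indicator_of_mem hωs]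
            ring
          · simp only [Set.indicator_of_notMem hωs, mul_zero]
  -- m_z p_z = E[Y_z S_z | X]
  have hmzpz : (fun ω => mz ω * (P[S z | mX X]) ω)
      =ᵐ[P] P[fun ω => Y z ω * S z ω | mX X] := by
    have h1 : (fun ω => mz ω * piZ P Z z * pscore P X S J z ω)
        =ᵐ[P] P[fun ω => Y z ω * S z ω * indic Z z ω | mX X] :=
      hmzP.trans (condExp_congr_ae (ae_of_all _ hYSind))
    have h2 := h1.trans hcondYSind.symm
    rw [hpseq] at h2
    filter_upwards [h2] with ω hω
    exact mul_left_cancel₀ hμz.ne' (by linear_combination hω)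
  -- principal ignorability summation
  have hPIsum : (fun ω => (P[fun ω' => Y z ω' * indG J S g ω' | mX X]) ω
        * (∑ g' ∈ Finset.Icc (J - z + 1) J, eg P X J S g' ω))
      =ᵐ[P] fun ω => (∑ g' ∈ Finset.Icc (J - z + 1) J,
        (P[fun ω' => Y z ω' * indG J S g' ω' | mX X]) ω) * eg P X J S g ω := by
    have hae : ∀ᵐ ω ∂P, ∀ g', g' ∈ Finset.Icc (J - z + 1) J →
        (P[fun ω' => Y z ω' * indG J S g ω' | mX X]) ω * eg P X J S g' ω
          = (P[fun ω' => Y z ω' * indG J S g' ω' | mX X]) ω * eg P X J S g ω := by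
      rw [MeasureTheory.ae_all_iff]
      intro g'
      by_cases hgI : g' ∈ Finset.Icc (J - z + 1) J
      · filter_upwards [hPI z hzmem g hgmem g' hgI] with ω h _
        exact h
      · exact Filter.Eventually.of_forall fun ω h => absurd h hgI
    filter_upwards [hae] with ω hω
    rw [Finset.mul_sum, Finset.sum_mul]
    exact Finset.sum_congr rfl fun g' hg' => hω g' hg'
  -- sum of eg equals p_z
  have hsum_eg : (fun ω => ∑ g' ∈ Finset.Icc (J - z + 1) J, eg P X J S g' ω)
      =ᵐ[P] P[S z | mX X] := by
    have h2 := condExp_finsetSum (μ := P) (m := mX X)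
      (s := Finset.Icc (J - z + 1) J) (f := fun g' => indG J S g')
      (fun i _ => hintindG i)
    have h4 : (fun ω => ∑ g' ∈ Finset.Icc (J - z + 1) J, eg P X J S g' ω)
        = (∑ g' ∈ Finset.Icc (J - z + 1) J, P[indG J S g' | mX X]) := by
      funext ω
      simp [eg, Finset.sum_apply]
    have h5 : (∑ g' ∈ Finset.Icc (J - z + 1) J, indG J S g')
        = fun ω => ∑ g' ∈ Finset.Icc (J - z + 1) J, indG J S g' ω := by
      funext ω
      simp [Finset.sum_apply]
    rw [h4]
    refine h2.symm.trans ?_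
    rw [h5]
    exact condExp_congr_ae hSsum.symm
  -- sum of E's equals E[Y_z S_z|X]
  have hsum_E : (fun ω => ∑ g' ∈ Finset.Icc (J - z + 1) J,
        (P[fun ω' => Y z ω' * indG J S g' ω' | mX X]) ω)
      =ᵐ[P] P[fun ω => Y z ω * S z ω | mX X] := by
    have h2 := condExp_finsetSum (μ := P) (m := mX X)
      (s := Finset.Icc (J - z + 1) J)
      (f := fun g' => fun ω => Y z ω * indG J S g' ω)
      (fun i _ => hintYindG i)
    have h4 : (fun ω => ∑ g' ∈ Finset.Icc (J - z + 1) J,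
          (P[fun ω' => Y z ω' * indG J S g' ω' | mX X]) ω)
        = (∑ g' ∈ Finset.Icc (J - z + 1) J,
            P[fun ω' => Y z ω' * indG J S g' ω' | mX X]) := by
      funext ω
      simp [Finset.sum_apply]
    have h6 : (∑ g' ∈ Finset.Icc (J - z + 1) J, fun ω => Y z ω * indG J S g' ω)
        =ᵐ[P] fun ω => Y z ω * S z ω := by
      filter_upwards [hSsum] with ω hω
      simp only [Finset.sum_apply]
      rw [← Finset.mul_sum, ← hω]
    rw [h4]
    exact h2.symm.trans (condExp_congr_ae h6)
  -- key identity
  have hEg : P[fun ω' => Y z ω' * indG J S g ω' | mX X]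
      =ᵐ[P] fun ω => mz ω * eg P X J S g ω := by
    have hkey : ∀ᵐ ω ∂P, (P[fun ω' => Y z ω' * indG J S g ω' | mX X]) ω
        * (P[S z | mX X]) ω = (mz ω * eg P X J S g ω) * (P[S z | mX X]) ω := by
      filter_upwards [hPIsum, hsum_eg, hsum_E, hmzpz] with ω h₁ h₂ h₃ h₄
      calc (P[fun ω' => Y z ω' * indG J S g ω' | mX X]) ω * (P[S z | mX X]) ω
          = (P[fun ω' => Y z ω' * indG J S g ω' | mX X]) ω
            * ∑ g' ∈ Finset.Icc (J - z + 1) J, eg P X J S g' ω := by rw [h₂]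
        _ = (∑ g' ∈ Finset.Icc (J - z + 1) J,
              (P[fun ω' => Y z ω' * indG J S g' ω' | mX X]) ω) * eg P X J S g ω := h₁
        _ = (P[fun ω => Y z ω * S z ω | mX X]) ω * eg P X J S g ω := by rw [h₃]
        _ = (mz ω * (P[S z | mX X]) ω) * eg P X J S g ω := by rw [← h₄]
        _ = (mz ω * eg P X J S g ω) * (P[S z | mX X]) ω := by ring
    filter_upwards [hkey, hpz_ae] with ω h₁ h₂
    have hne : (P[S z | mX X]) ω ≠ 0 := (lt_of_lt_of_le hc h₂).ne'
    exact mul_right_cancel₀ hne h₁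
  -- pull-out property
  have hpull : P[fun ω => mz ω * indG J S g ω | mX X]
      =ᵐ[P] fun ω => mz ω * eg P X J S g ω := by
    have hsm : StronglyMeasurable[mX X] mz := hmz.stronglyMeasurable
    have h := condExp_mul_of_stronglyMeasurable_left (μ := P) hsm
      (show Integrable (mz * indG J S g) P from hintmzindG) (hintindG g)
    exact h
  -- integrability of the "if" term
  have hint_ite : Integrable (fun ω => (if J - g = 0 then 0 else S (J - g) ω) * mz ω) P := by
    by_cases h0 : J - g = 0
    · have hz0 : (fun ω => (if J - g = 0 then 0 else S (J - g) ω) * mz ω)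
          = fun _ => (0 : ℝ) := by
        funext ω
        rw [if_pos h0, zero_mul]
      rw [hz0]
      exact integrable_zero _ _ _
    · simp only [if_neg h0]
      exact hintSmz (J - g)
  -- final computation
  calc ∫ ω, Y z ω * indG J S g ω ∂P
      = ∫ ω, (P[fun ω' => Y z ω' * indG J S g ω' | mX X]) ω ∂P :=
        (integral_condExp hm).symm
    _ = ∫ ω, mz ω * eg P X J S g ω ∂P := integral_congr_ae hEg
    _ = ∫ ω, (P[fun ω' => mz ω' * indG J S g ω' | mX X]) ω ∂P :=
        (integral_congr_ae hpull).symm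
    _ = ∫ ω, mz ω * indG J S g ω ∂P := integral_condExp hm
    _ = ∫ ω, (S (J - g + 1) ω - (if J - g = 0 then 0 else S (J - g) ω)) * mz ω ∂P := by
        refine integral_congr_ae ?_
        filter_upwards [hindG] with ω h
        rw [h]
        ring
    _ = (∫ ω, S (J - g + 1) ω * mz ω ∂P)
          - ∫ ω, (if J - g = 0 then 0 else S (J - g) ω) * mz ω ∂P := by
        simp_rw [sub_mul]
        exact integral_sub (hintSmz (J - g + 1)) hint_ite
    _ = (∫ ω, wterm P J Z S (J - g + 1) ω * mz ω ∂P)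
          - ∫ ω, wterm P J Z S (J - g) ω * mz ω ∂P := by
        rw [hstep_w (J - g + 1) (by simp only [Finset.mem_Icc]; omega)]
        by_cases h0 : J - g = 0
        · rw [h0]
          simp [hwterm0]
        · rw [hstep_w (J - g) (by simp only [Finset.mem_Icc]; omega)]
          simp only [if_neg h0]
    _ = ∫ ω, (wterm P J Z S (J - g + 1) ω - wterm P J Z S (J - g) ω) * mz ω ∂P := by
        simp_rw [sub_mul]
        rw [integral_sub (hint_wterm _) (hint_wterm _)]


end TruncationByDeath
end
end
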